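/- Assume the F-expectation satisfies (H0)–(H7) and let {X(τ):τ∈S_0} be a CE admissible family with sup_{τ∈S_0} E[X(τ)] < ∞, with value function v. Then for every S∈S_0 and every λ∈(0,1), the random time τ^λ(S)=essinf{τ∈S_S: λ v(τ) ≤ X(τ) a.s.} is a stopping time and satisfies v(S) = E_S[v(τ^λ(S))] a.s. -/

import Mathlib

open MeasureTheory Filter Set

noncomputable section

namespace OptMultStop

variable {Ω : Type*}

/-- A real function is right-continuous with left limits (RCLL) on `[0, T]`. -/
def RCLLOn (f : ℝ → ℝ) (T : ℝ) : Prop :=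
  (∀ t ∈ Set.Ico (0 : ℝ) T, ContinuousWithinAt f (Set.Ici t) t) ∧
    ∀ t ∈ Set.Ioc (0 : ℝ) T, ∃ l : ℝ, Filter.Tendsto f (nhdsWithin t (Set.Iio t)) (nhds l)

/-- A real function is right-continuous on `[0, T)`. -/
def RCOn (f : ℝ → ℝ) (T : ℝ) : Prop :=
  ∀ t ∈ Set.Ico (0 : ℝ) T, ContinuousWithinAt f (Set.Ici t) t

/-- `τ` is a stopping time for `ℱ` taking values in `[s ·, T]`; for `s = S` a stopping
time this encodes membership in `S_S`. -/
def IsStopIn [m : MeasurableSpace Ω] (ℱ : Filtration ℝ m) (T : ℝ) (s τ : Ω → ℝ) : Prop :=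
  IsStoppingTime ℱ (fun ω => (τ ω : WithTop ℝ)) ∧ (∀ ω, s ω ≤ τ ω) ∧ ∀ ω, τ ω ≤ T

/-- Membership in `S_0`: a stopping time with values in `[0, T]`. -/
def Stop0 [m : MeasurableSpace Ω] (ℱ : Filtration ℝ m) (T : ℝ) (τ : Ω → ℝ) : Prop :=
  IsStopIn ℱ T (fun _ => (0 : ℝ)) τ

/-- `g` is an essential supremum of the family of random variables `s`. -/
def IsEssSupFam [MeasurableSpace Ω] (μ : Measure Ω) (s : Set (Ω → ℝ)) (g : Ω → ℝ) : Prop :=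
  (∀ f ∈ s, f ≤ᵐ[μ] g) ∧ ∀ h : Ω → ℝ, (∀ f ∈ s, f ≤ᵐ[μ] h) → g ≤ᵐ[μ] h

/-- `g` is an essential infimum of the family of random variables `s`. -/
def IsEssInfFam [MeasurableSpace Ω] (μ : Measure Ω) (s : Set (Ω → ℝ)) (g : Ω → ℝ) : Prop :=
  (∀ f ∈ s, g ≤ᵐ[μ] f) ∧ ∀ h : Ω → ℝ, (∀ f ∈ s, h ≤ᵐ[μ] f) → h ≤ᵐ[μ] g

/-- An `𝔽`-consistent nonlinear expectation `(E, Dom(E))` on the horizon `[0, T]`,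
together with its conditional versions at stopping times, satisfying the domain
axioms (D1)-(D3), (A1)-(A4) at stopping times, and hypotheses (H0)-(H5). -/
structure FExp [m : MeasurableSpace Ω] (μ : Measure Ω) (T : ℝ) (ℱ : Filtration ℝ m) where
  /-- the domain `Dom(E)` -/
  Dom : Set (Ω → ℝ)
  /-- `cond τ ξ` is the conditional expectation `E_τ[ξ]` at the stopping time `τ` -/
  cond : (Ω → ℝ) → (Ω → ℝ) → Ω → ℝ
  /-- `E0 ξ` is the (deterministic) value `E[ξ] = E_0[ξ]` -/
  E0 : (Ω → ℝ) → ℝ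
  zero_mem : (fun _ => (0 : ℝ)) ∈ Dom
  one_mem : (fun _ => (1 : ℝ)) ∈ Dom
  /-- (H4): all constants belong to the domain -/
  const_mem : ∀ c : ℝ, (fun _ => c) ∈ Dom
  add_mem : ∀ {ξ η : Ω → ℝ}, ξ ∈ Dom → η ∈ Dom → ξ + η ∈ Dom
  indicator_mem : ∀ {ξ : Ω → ℝ}, ξ ∈ Dom → ∀ {A : Set Ω}, MeasurableSet A →
    A.indicator ξ ∈ Dom
  sandwich_mem : ∀ {ξ η : Ω → ℝ}, η ∈ Dom → (∀ᵐ ω ∂μ, 0 ≤ ξ ω ∧ ξ ω ≤ η ω) → ξ ∈ Dom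
  cond_mem : ∀ {τ ξ : Ω → ℝ}, Stop0 ℱ T τ → ξ ∈ Dom → 0 ≤ᵐ[μ] ξ → cond τ ξ ∈ Dom
  cond_nonneg : ∀ {τ ξ : Ω → ℝ}, Stop0 ℱ T τ → ξ ∈ Dom → 0 ≤ᵐ[μ] ξ → 0 ≤ᵐ[μ] cond τ ξ
  /-- `E_τ[ξ]` is `F_τ`-measurable -/
  cond_adapted : ∀ {τ ξ : Ω → ℝ} (hτ : Stop0 ℱ T τ), ξ ∈ Dom → 0 ≤ᵐ[μ] ξ →
    Measurable[hτ.1.measurableSpace] (cond τ ξ)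
  /-- monotonicity -/
  mono : ∀ {τ ξ η : Ω → ℝ}, Stop0 ℱ T τ → ξ ∈ Dom → 0 ≤ᵐ[μ] ξ → η ∈ Dom → 0 ≤ᵐ[μ] η →
    ξ ≤ᵐ[μ] η → cond τ ξ ≤ᵐ[μ] cond τ η
  /-- strict monotonicity -/
  strict_mono : ∀ {τ ξ η : Ω → ℝ}, Stop0 ℱ T τ → ξ ∈ Dom → 0 ≤ᵐ[μ] ξ → η ∈ Dom →
    0 ≤ᵐ[μ] η → ξ ≤ᵐ[μ] η → cond τ ξ =ᵐ[μ] cond τ η → ξ =ᵐ[μ] η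
  /-- time consistency -/
  time_consistent : ∀ {σ τ ξ : Ω → ℝ}, Stop0 ℱ T σ → Stop0 ℱ T τ → (∀ ω, σ ω ≤ τ ω) →
    ξ ∈ Dom → 0 ≤ᵐ[μ] ξ → cond σ (cond τ ξ) =ᵐ[μ] cond σ ξ
  /-- zero-one law -/
  zero_one : ∀ {τ ξ : Ω → ℝ} (hτ : Stop0 ℱ T τ), ξ ∈ Dom → 0 ≤ᵐ[μ] ξ →
    ∀ {A : Set Ω}, MeasurableSet[hτ.1.measurableSpace] A →
    cond τ (A.indicator ξ) =ᵐ[μ] A.indicator (cond τ ξ)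
  /-- translation invariance -/
  translation : ∀ {τ ξ η : Ω → ℝ} (hτ : Stop0 ℱ T τ), ξ ∈ Dom → 0 ≤ᵐ[μ] ξ → η ∈ Dom →
    0 ≤ᵐ[μ] η → Measurable[hτ.1.measurableSpace] η → cond τ (ξ + η) =ᵐ[μ] cond τ ξ + η
  /-- `F_0` is trivial: `E_0[ξ]` is the constant `E0 ξ` -/
  E0_eq : ∀ {ξ : Ω → ℝ}, ξ ∈ Dom → 0 ≤ᵐ[μ] ξ →
    cond (fun _ => (0 : ℝ)) ξ =ᵐ[μ] fun _ => E0 ξ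
  /-- the process `t ↦ E_t[ξ]` has RCLL paths -/
  rcll_paths : ∀ {ξ : Ω → ℝ}, ξ ∈ Dom → 0 ≤ᵐ[μ] ξ →
    ∀ᵐ ω ∂μ, RCLLOn (fun t => cond (fun _ => t) ξ ω) T
  /-- (H0) -/
  h0 : ∀ {A : Set Ω}, MeasurableSet A → 0 < μ A →
    Tendsto (fun n : ℕ => E0 (A.indicator fun _ => (n : ℝ))) atTop atTop
  /-- (H1) -/
  h1 : ∀ {ξ : Ω → ℝ}, ξ ∈ Dom → 0 ≤ᵐ[μ] ξ → ∀ {A : ℕ → Set Ω},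
    (∀ n, MeasurableSet (A n)) → Monotone A → (∀ᵐ ω ∂μ, ω ∈ ⋃ n, A n) →
    Tendsto (fun n => E0 ((A n).indicator ξ)) atTop (nhds (E0 ξ))
  /-- (H2) -/
  h2 : ∀ {ξ η : Ω → ℝ}, ξ ∈ Dom → 0 ≤ᵐ[μ] ξ → η ∈ Dom → 0 ≤ᵐ[μ] η →
    ∀ {A : ℕ → Set Ω}, (∀ n, MeasurableSet (A n)) → Antitone A →
    (∀ᵐ ω ∂μ, ω ∉ ⋂ n, A n) →
    Tendsto (fun n => E0 (ξ + (A n).indicator η)) atTop (nhds (E0 ξ))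
  /-- (H5) -/
  h5 : ∀ {ξ : ℕ → Ω → ℝ} {ζ : Ω → ℝ}, (∀ n, ξ n ∈ Dom) → (∀ n, 0 ≤ᵐ[μ] ξ n) →
    (∀ᵐ ω ∂μ, Tendsto (fun n => ξ n ω) atTop (nhds (ζ ω))) →
    (∃ C : ℝ, ∃ᶠ n in atTop, E0 (ξ n) ≤ C) → ζ ∈ Dom

variable [m : MeasurableSpace Ω] {μ : Measure Ω} {T : ℝ} {ℱ : Filtration ℝ m}

/-- (H6): sub-additivity. -/
def FExp.Subadditive (𝔈 : FExp μ T ℱ) : Prop :=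
  ∀ ⦃τ ξ η : Ω → ℝ⦄, Stop0 ℱ T τ → ξ ∈ 𝔈.Dom → 0 ≤ᵐ[μ] ξ → η ∈ 𝔈.Dom → 0 ≤ᵐ[μ] η →
    𝔈.cond τ (ξ + η) ≤ᵐ[μ] 𝔈.cond τ ξ + 𝔈.cond τ η

/-- (H7): positive homogeneity. -/
def FExp.PosHom (𝔈 : FExp μ T ℱ) : Prop :=
  ∀ ⦃τ ξ : Ω → ℝ⦄ (l : ℝ), 0 ≤ l → Stop0 ℱ T τ → ξ ∈ 𝔈.Dom → 0 ≤ᵐ[μ] ξ →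
    𝔈.cond τ (fun ω => l * ξ ω) =ᵐ[μ] fun ω => l * 𝔈.cond τ ξ ω

/-- Admissible family of rewards indexed by stopping times. -/
def Admissible (𝔈 : FExp μ T ℱ) (X : (Ω → ℝ) → Ω → ℝ) : Prop :=
  (∀ τ : Ω → ℝ, ∀ hτ : Stop0 ℱ T τ, X τ ∈ 𝔈.Dom ∧ 0 ≤ᵐ[μ] X τ ∧
      Measurable[hτ.1.measurableSpace] (X τ)) ∧
    ∀ τ σ : Ω → ℝ, Stop0 ℱ T τ → Stop0 ℱ T σ →
      ∀ᵐ ω ∂μ, τ ω = σ ω → X τ ω = X σ ω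

/-- `sup_{τ ∈ S_0} E[X(τ)] < ∞`. -/
def BddRewardE0 (𝔈 : FExp μ T ℱ) (X : (Ω → ℝ) → Ω → ℝ) : Prop :=
  ∃ C : ℝ, ∀ τ : Ω → ℝ, Stop0 ℱ T τ → 𝔈.E0 (X τ) ≤ C

/-- `v` is the value function family of the single stopping problem for the reward `X`:
`v(S) = esssup_{τ ∈ S_S} E_S[X(τ)]`. -/
def IsValueFam (𝔈 : FExp μ T ℱ) (X v : (Ω → ℝ) → Ω → ℝ) : Prop :=
  ∀ S : Ω → ℝ, Stop0 ℱ T S →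
    IsEssSupFam μ {g | ∃ τ : Ω → ℝ, IsStopIn ℱ T S τ ∧ g = 𝔈.cond S (X τ)} (v S)

/-- An `E`-supermartingale system. -/
def SupermartSys (𝔈 : FExp μ T ℱ) (h : (Ω → ℝ) → Ω → ℝ) : Prop :=
  (∀ τ : Ω → ℝ, ∀ hτ : Stop0 ℱ T τ, h τ ∈ 𝔈.Dom ∧ 0 ≤ᵐ[μ] h τ ∧
      Measurable[hτ.1.measurableSpace] (h τ)) ∧
    ∀ τ σ : Ω → ℝ, Stop0 ℱ T τ → Stop0 ℱ T σ → (∀ᵐ ω ∂μ, τ ω ≤ σ ω) →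
      𝔈.cond τ (h σ) ≤ᵐ[μ] h τ

/-- Right-continuity along stopping times in `E`-expectation (RCE). -/
def RCE (𝔈 : FExp μ T ℱ) (X : (Ω → ℝ) → Ω → ℝ) : Prop :=
  ∀ τ : Ω → ℝ, Stop0 ℱ T τ → ∀ τs : ℕ → Ω → ℝ, (∀ n, Stop0 ℱ T (τs n)) →
    (∀ᵐ ω ∂μ, Antitone (fun n => τs n ω) ∧
      Tendsto (fun n => τs n ω) atTop (nhds (τ ω))) →
    Tendsto (fun n => 𝔈.E0 (X (τs n))) atTop (nhds (𝔈.E0 (X τ)))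

/-- Left-continuity along stopping times in `E`-expectation (LCE). -/
def LCE (𝔈 : FExp μ T ℱ) (X : (Ω → ℝ) → Ω → ℝ) : Prop :=
  ∀ τ : Ω → ℝ, Stop0 ℱ T τ → ∀ τs : ℕ → Ω → ℝ, (∀ n, Stop0 ℱ T (τs n)) →
    (∀ᵐ ω ∂μ, Monotone (fun n => τs n ω) ∧
      Tendsto (fun n => τs n ω) atTop (nhds (τ ω))) →
    Tendsto (fun n => 𝔈.E0 (X (τs n))) atTop (nhds (𝔈.E0 (X τ)))

/-- Continuity along stopping times in `E`-expectation (CE). -/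
def CE (𝔈 : FExp μ T ℱ) (X : (Ω → ℝ) → Ω → ℝ) : Prop :=
  RCE 𝔈 X ∧ LCE 𝔈 X

/-- Right-continuity along stopping times (RC): a.s. pointwise convergence. -/
def RCfam (𝔈 : FExp μ T ℱ) (X : (Ω → ℝ) → Ω → ℝ) : Prop :=
  ∀ τ : Ω → ℝ, Stop0 ℱ T τ → ∀ τs : ℕ → Ω → ℝ, (∀ n, Stop0 ℱ T (τs n)) →
    (∀ᵐ ω ∂μ, Antitone (fun n => τs n ω) ∧
      Tendsto (fun n => τs n ω) atTop (nhds (τ ω))) →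
    ∀ᵐ ω ∂μ, Tendsto (fun n => X (τs n) ω) atTop (nhds (X τ ω))

/-- Biadmissible family of rewards indexed by pairs of stopping times. -/
def Biadmissible (𝔈 : FExp μ T ℱ) (X : (Ω → ℝ) → (Ω → ℝ) → Ω → ℝ) : Prop :=
  (∀ τ σ : Ω → ℝ, ∀ hτ : Stop0 ℱ T τ, ∀ hσ : Stop0 ℱ T σ,
      X τ σ ∈ 𝔈.Dom ∧ 0 ≤ᵐ[μ] X τ σ ∧
      Measurable[(hτ.1.max hσ.1).measurableSpace] (X τ σ)) ∧
    ∀ τ σ τ' σ' : Ω → ℝ, Stop0 ℱ T τ → Stop0 ℱ T σ → Stop0 ℱ T τ' → Stop0 ℱ T σ' →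
      ∀ᵐ ω ∂μ, τ ω = τ' ω → σ ω = σ' ω → X τ σ ω = X τ' σ' ω

/-- `sup_{τ,σ ∈ S_0} E[X(τ,σ)] < ∞`. -/
def BddReward2E0 (𝔈 : FExp μ T ℱ) (X : (Ω → ℝ) → (Ω → ℝ) → Ω → ℝ) : Prop :=
  ∃ C : ℝ, ∀ τ σ : Ω → ℝ, Stop0 ℱ T τ → Stop0 ℱ T σ → 𝔈.E0 (X τ σ) ≤ C

/-- `v` is the value function family of the double stopping problem:
`v(S) = esssup_{τ₁,τ₂ ∈ S_S} E_S[X(τ₁,τ₂)]`. -/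
def IsValueFam2 (𝔈 : FExp μ T ℱ) (X : (Ω → ℝ) → (Ω → ℝ) → Ω → ℝ)
    (v : (Ω → ℝ) → Ω → ℝ) : Prop :=
  ∀ S : Ω → ℝ, Stop0 ℱ T S →
    IsEssSupFam μ
      {g | ∃ τ₁ τ₂ : Ω → ℝ, IsStopIn ℱ T S τ₁ ∧ IsStopIn ℱ T S τ₂ ∧
        g = 𝔈.cond S (X τ₁ τ₂)} (v S)

/-- `u₁(θ) = esssup_{τ₁ ∈ S_θ} E_θ[X(τ₁, θ)]`. -/
def IsU1 (𝔈 : FExp μ T ℱ) (X : (Ω → ℝ) → (Ω → ℝ) → Ω → ℝ) (u₁ : (Ω → ℝ) → Ω → ℝ) : Prop :=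
  ∀ θ : Ω → ℝ, Stop0 ℱ T θ →
    IsEssSupFam μ {g | ∃ τ : Ω → ℝ, IsStopIn ℱ T θ τ ∧ g = 𝔈.cond θ (X τ θ)} (u₁ θ)

/-- `u₂(θ) = esssup_{τ₂ ∈ S_θ} E_θ[X(θ, τ₂)]`. -/
def IsU2 (𝔈 : FExp μ T ℱ) (X : (Ω → ℝ) → (Ω → ℝ) → Ω → ℝ) (u₂ : (Ω → ℝ) → Ω → ℝ) : Prop :=
  ∀ θ : Ω → ℝ, Stop0 ℱ T θ →
    IsEssSupFam μ {g | ∃ τ : Ω → ℝ, IsStopIn ℱ T θ τ ∧ g = 𝔈.cond θ (X θ τ)} (u₂ θ)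

/-- Uniform right-continuity of a biadmissible family along stopping times in
`ℰ`-expectation (URCℰ). -/
def URCE2 (ℰ : FExp μ T ℱ) (X : (Ω → ℝ) → (Ω → ℝ) → Ω → ℝ) : Prop :=
  ∀ σ : Ω → ℝ, Stop0 ℱ T σ → ∀ σs : ℕ → Ω → ℝ, (∀ n, Stop0 ℱ T (σs n)) →
    (∀ᵐ ω ∂μ, Antitone (fun n => σs n ω) ∧
      Tendsto (fun n => σs n ω) atTop (nhds (σ ω))) →
    ∀ ε : ℝ, 0 < ε → ∃ N : ℕ, ∀ n ≥ N, ∀ τ : Ω → ℝ, Stop0 ℱ T τ →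
      ℰ.E0 (fun ω => |X τ σ ω - X τ (σs n) ω|) ≤ ε ∧
      ℰ.E0 (fun ω => |X σ τ ω - X (σs n) τ ω|) ≤ ε

/-- Uniform left-continuity of a biadmissible family along stopping times in
`ℰ`-expectation (ULCℰ). -/
def ULCE2 (ℰ : FExp μ T ℱ) (X : (Ω → ℝ) → (Ω → ℝ) → Ω → ℝ) : Prop :=
  ∀ σ : Ω → ℝ, Stop0 ℱ T σ → ∀ σs : ℕ → Ω → ℝ, (∀ n, Stop0 ℱ T (σs n)) →
    (∀ᵐ ω ∂μ, Monotone (fun n => σs n ω) ∧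
      Tendsto (fun n => σs n ω) atTop (nhds (σ ω))) →
    ∀ ε : ℝ, 0 < ε → ∃ N : ℕ, ∀ n ≥ N, ∀ τ : Ω → ℝ, Stop0 ℱ T τ →
      ℰ.E0 (fun ω => |X τ σ ω - X τ (σs n) ω|) ≤ ε ∧
      ℰ.E0 (fun ω => |X σ τ ω - X (σs n) τ ω|) ≤ ε

/-- Uniform continuity (UCℰ) of a biadmissible family. -/
def UCE2 (ℰ : FExp μ T ℱ) (X : (Ω → ℝ) → (Ω → ℝ) → Ω → ℝ) : Prop :=
  URCE2 ℰ X ∧ ULCE2 ℰ X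

/-- `(E, Dom(E))` is dominated by `(Ẽ, Dom(Ẽ))`. -/
def Dominated (𝔈 𝔉 : FExp μ T ℱ) : Prop :=
  𝔈.Dom ⊆ 𝔉.Dom ∧
    ∀ τ : Ω → ℝ, Stop0 ℱ T τ → ∀ ξ η : Ω → ℝ, ξ ∈ 𝔈.Dom → η ∈ 𝔈.Dom →
      ∀ᵐ ω ∂μ, 𝔈.cond τ (ξ + η) ω - 𝔈.cond τ η ω ≤ 𝔉.cond τ ξ ω

/-- The filtration contains all `μ`-null sets (part of the usual conditions). -/
def CompleteFiltration (μ : Measure Ω) (ℱ : Filtration ℝ m) : Prop :=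
  ∀ s : Set Ω, μ s = 0 → ∀ t : ℝ, MeasurableSet[ℱ t] s

/-- The filtration is right-continuous (part of the usual conditions). -/
def RightContinuousFiltration (ℱ : Filtration ℝ m) : Prop :=
  ∀ t : ℝ, (ℱ t : MeasurableSpace Ω) = ⨅ u ∈ Set.Ioi t, ℱ u

/-- A `d`-tuple of stopping times, all in `S_s`. -/
def StopVec (ℱ : Filtration ℝ m) (T : ℝ) (s : Ω → ℝ) {d : ℕ} (τ : Fin d → Ω → ℝ) : Prop :=
  ∀ i, IsStopIn ℱ T s (τ i)

/-- A `d`-admissible family of rewards. -/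
def DAdmissible (𝔈 : FExp μ T ℱ) {d : ℕ} (X : (Fin d → Ω → ℝ) → Ω → ℝ) : Prop :=
  (∀ τ : Fin d → Ω → ℝ, StopVec ℱ T (fun _ => (0 : ℝ)) τ →
      X τ ∈ 𝔈.Dom ∧ 0 ≤ᵐ[μ] X τ ∧
      ∀ h : IsStoppingTime ℱ fun ω => (((⨆ i, τ i ω : ℝ)) : WithTop ℝ),
        Measurable[h.measurableSpace] (X τ)) ∧
    ∀ τ σ : Fin d → Ω → ℝ, StopVec ℱ T (fun _ => (0 : ℝ)) τ →
      StopVec ℱ T (fun _ => (0 : ℝ)) σ →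
      ∀ᵐ ω ∂μ, (∀ i, τ i ω = σ i ω) → X τ ω = X σ ω

/-- `sup_{τ ∈ S_0^d} E[X(τ)] < ∞`. -/
def BddRewardDE0 (𝔈 : FExp μ T ℱ) {d : ℕ} (X : (Fin d → Ω → ℝ) → Ω → ℝ) : Prop :=
  ∃ C : ℝ, ∀ τ : Fin d → Ω → ℝ, StopVec ℱ T (fun _ => (0 : ℝ)) τ → 𝔈.E0 (X τ) ≤ C

/-- `v` is the value function family of the `d`-stopping problem:
`v(S) = esssup_{τ ∈ S_S^d} E_S[X(τ)]`. -/
def IsValueFamD (𝔈 : FExp μ T ℱ) {d : ℕ} (X : (Fin d → Ω → ℝ) → Ω → ℝ)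
    (v : (Ω → ℝ) → Ω → ℝ) : Prop :=
  ∀ S : Ω → ℝ, Stop0 ℱ T S →
    IsEssSupFam μ
      {g | ∃ τ : Fin d → Ω → ℝ, StopVec ℱ T S τ ∧ g = 𝔈.cond S (X τ)} (v S)

/-- `u^{(i)}(θ) = esssup_{τ ∈ S_θ^{d-1}} E_θ[X^{(i)}(τ, θ)]`, where `X^{(i)}(τ, θ)`
inserts `θ` in the `i`-th slot. -/
def IsUi (𝔈 : FExp μ T ℱ) {d : ℕ} (X : (Fin (d + 1) → Ω → ℝ) → Ω → ℝ)
    (ui : Fin (d + 1) → (Ω → ℝ) → Ω → ℝ) : Prop :=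
  ∀ i : Fin (d + 1), ∀ θ : Ω → ℝ, Stop0 ℱ T θ →
    IsEssSupFam μ
      {g | ∃ τ : Fin d → Ω → ℝ, StopVec ℱ T θ τ ∧ g = 𝔈.cond θ (X (i.insertNth θ τ))}
      (ui i θ)

/-- Uniform continuity (UCE) of a `d`-admissible family along monotone sequences of
stopping times. -/
def UCED (𝔈 : FExp μ T ℱ) {d : ℕ} (X : (Fin (d + 1) → Ω → ℝ) → Ω → ℝ) : Prop :=
  ∀ i : Fin (d + 1), ∀ S : Ω → ℝ, Stop0 ℱ T S → ∀ Ss : ℕ → Ω → ℝ,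
    (∀ n, Stop0 ℱ T (Ss n)) →
    ((∀ᵐ ω ∂μ, Monotone fun n => Ss n ω) ∨ (∀ᵐ ω ∂μ, Antitone fun n => Ss n ω)) →
    (∀ᵐ ω ∂μ, Tendsto (fun n => Ss n ω) atTop (nhds (S ω))) →
    ∀ ε : ℝ, 0 < ε → ∃ N : ℕ, ∀ n ≥ N, ∀ θ : Fin d → Ω → ℝ,
      StopVec ℱ T (fun _ => (0 : ℝ)) θ →
      𝔈.E0 (fun ω => |X (i.insertNth (Ss n) θ) ω - X (i.insertNth S θ) ω|) ≤ ε


section AuxProofs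

open scoped Classical

variable {𝔈 : FExp μ T ℱ}

lemma stop0_const {c : ℝ} (h0 : 0 ≤ c) (hc : c ≤ T) : Stop0 ℱ T (fun _ => c) :=
  ⟨isStoppingTime_const ℱ c, fun _ => h0, fun _ => hc⟩

lemma Stop0.stopIn_self {θ : Ω → ℝ} (hθ : Stop0 ℱ T θ) : IsStopIn ℱ T θ θ :=
  ⟨hθ.1, fun _ => le_rfl, hθ.2.2⟩

lemma Stop0.stopIn_constT {θ : Ω → ℝ} (hθ : Stop0 ℱ T θ) :
    IsStopIn ℱ T θ (fun _ => T) :=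
  ⟨isStoppingTime_const ℱ T, fun ω => hθ.2.2 ω, fun _ => le_rfl⟩

lemma IsStopIn.stop0 {S τ : Ω → ℝ} (hS : Stop0 ℱ T S) (h : IsStopIn ℱ T S τ) :
    Stop0 ℱ T τ :=
  ⟨h.1, fun ω => le_trans (hS.2.1 ω) (h.2.1 ω), h.2.2⟩

lemma stop_ms_congr {τ τ' : Ω → WithTop ℝ} (h : IsStoppingTime ℱ τ) (h' : IsStoppingTime ℱ τ')
    (e : τ = τ') : h.measurableSpace = h'.measurableSpace := by
  subst e; rfl

lemma stopR_le {τ : Ω → ℝ} (h : IsStoppingTime ℱ (fun ω => (τ ω : WithTop ℝ))) (t : ℝ) :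
    MeasurableSet[ℱ t] {ω | τ ω ≤ t} := by
  simpa only [WithTop.coe_le_coe] using h t

lemma stopR_ms {τ : Ω → ℝ} (h : IsStoppingTime ℱ (fun ω => (τ ω : WithTop ℝ))) (s : Set Ω) :
    MeasurableSet[h.measurableSpace] s ↔
      MeasurableSet[⨆ t, ℱ t] s ∧ ∀ t : ℝ, MeasurableSet[ℱ t] (s ∩ {ω | τ ω ≤ t}) := by
  rw [h.measurableSet]
  simp only [WithTop.coe_le_coe]

lemma stopR_measurable {τ : Ω → ℝ} (h : IsStoppingTime ℱ (fun ω => (τ ω : WithTop ℝ))) :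
    Measurable τ := by
  simpa using h.measurable'.untopD 0

lemma stopR_min {τ σ : Ω → ℝ} (hτ : IsStoppingTime ℱ (fun ω => (τ ω : WithTop ℝ)))
    (hσ : IsStoppingTime ℱ (fun ω => (σ ω : WithTop ℝ))) :
    IsStoppingTime ℱ (fun ω => ((min (τ ω) (σ ω) : ℝ) : WithTop ℝ)) := by
  have h := hτ.min hσ
  simpa only [WithTop.coe_min] using h

lemma stopR_min_iff {τ σ : Ω → ℝ} (hτ : IsStoppingTime ℱ (fun ω => (τ ω : WithTop ℝ)))
    (hσ : IsStoppingTime ℱ (fun ω => (σ ω : WithTop ℝ))) (s : Set Ω) :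
    MeasurableSet[(stopR_min hτ hσ).measurableSpace] s ↔
      MeasurableSet[hτ.measurableSpace] s ∧ MeasurableSet[hσ.measurableSpace] s := by
  rw [← IsStoppingTime.measurableSet_min_iff hτ hσ]

lemma null_measurableSet_stopping (hcf : CompleteFiltration μ ℱ) {τ : Ω → ℝ}
    (hτ : IsStoppingTime ℱ (fun ω => (τ ω : WithTop ℝ))) {s : Set Ω} (hs : μ s = 0) :
    MeasurableSet[hτ.measurableSpace] s :=
  (stopR_ms hτ s).mpr ⟨le_iSup (fun t => ℱ t) 0 s (hcf s hs 0),
    fun i => hcf _ (measure_mono_null Set.inter_subset_left hs) i⟩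

lemma const_le_const_of_ae [IsProbabilityMeasure μ] {a b : ℝ}
    (h : (fun _ : Ω => a) ≤ᵐ[μ] fun _ => b) : a ≤ b := by
  have : (MeasureTheory.ae μ).NeBot := ae_neBot.2 (IsProbabilityMeasure.ne_zero μ)
  obtain ⟨ω, hω⟩ := h.exists
  exact hω

lemma const_eq_const_of_ae [IsProbabilityMeasure μ] {a b : ℝ}
    (h : (fun _ : Ω => a) =ᵐ[μ] fun _ => b) : a = b :=
  le_antisymm (const_le_const_of_ae h.le) (const_le_const_of_ae h.symm.le)

namespace FExp

lemma cond_zero (h7 : 𝔈.PosHom) {τ : Ω → ℝ} (hτ : Stop0 ℱ T τ) :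
    𝔈.cond τ (fun _ => (0:ℝ)) =ᵐ[μ] fun _ => (0:ℝ) := by
  have h := h7 (τ := τ) (ξ := fun _ => (0:ℝ)) 0 le_rfl hτ 𝔈.zero_mem
    (Filter.Eventually.of_forall fun _ => le_rfl)
  have e : (fun ω => (0:ℝ) * (fun _ : Ω => (0:ℝ)) ω) = fun _ : Ω => (0:ℝ) := by
    funext ω; simp
  rw [e] at h
  exact h.trans (Filter.Eventually.of_forall fun ω => by simp)

lemma cond_congr {τ ξ ξ' : Ω → ℝ} (hτ : Stop0 ℱ T τ)
    (hξ : ξ ∈ 𝔈.Dom) (hξ0 : 0 ≤ᵐ[μ] ξ) (hξ' : ξ' ∈ 𝔈.Dom) (hξ'0 : 0 ≤ᵐ[μ] ξ')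
    (h : ξ =ᵐ[μ] ξ') : 𝔈.cond τ ξ =ᵐ[μ] 𝔈.cond τ ξ' :=
  (𝔈.mono hτ hξ hξ0 hξ' hξ'0 h.le).antisymm (𝔈.mono hτ hξ' hξ'0 hξ hξ0 h.symm.le)

lemma cond_id (h7 : 𝔈.PosHom) {τ ξ : Ω → ℝ} (hτ : Stop0 ℱ T τ)
    (hξ : ξ ∈ 𝔈.Dom) (hξ0 : 0 ≤ᵐ[μ] ξ)
    (hm : Measurable[hτ.1.measurableSpace] ξ) : 𝔈.cond τ ξ =ᵐ[μ] ξ := by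
  have h := 𝔈.translation hτ 𝔈.zero_mem (Filter.Eventually.of_forall fun _ => le_rfl)
    hξ hξ0 hm
  have e : ((fun _ : Ω => (0:ℝ)) + ξ) = ξ := by funext ω; simp [Pi.add_apply]
  rw [e] at h
  refine h.trans ?_
  filter_upwards [cond_zero h7 hτ] with ω hω
  simp [Pi.add_apply, hω]

variable [IsProbabilityMeasure μ]

lemma E0_congr {ξ ξ' : Ω → ℝ} (hξ : ξ ∈ 𝔈.Dom) (hξ0 : 0 ≤ᵐ[μ] ξ)
    (hξ' : ξ' ∈ 𝔈.Dom) (hξ'0 : 0 ≤ᵐ[μ] ξ') (h : ξ =ᵐ[μ] ξ') (hT : 0 ≤ T) :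
    𝔈.E0 ξ = 𝔈.E0 ξ' := by
  have h0 : Stop0 ℱ T (fun _ => (0:ℝ)) := stop0_const le_rfl hT
  have h1 := 𝔈.E0_eq hξ hξ0
  have h2 := 𝔈.E0_eq hξ' hξ'0
  have h3 := cond_congr h0 hξ hξ0 hξ' hξ'0 h
  exact const_eq_const_of_ae (h1.symm.trans (h3.trans h2))

lemma E0_mono {ξ ξ' : Ω → ℝ} (hξ : ξ ∈ 𝔈.Dom) (hξ0 : 0 ≤ᵐ[μ] ξ)
    (hξ' : ξ' ∈ 𝔈.Dom) (hξ'0 : 0 ≤ᵐ[μ] ξ') (h : ξ ≤ᵐ[μ] ξ') (hT : 0 ≤ T) :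
    𝔈.E0 ξ ≤ 𝔈.E0 ξ' := by
  have h0 : Stop0 ℱ T (fun _ => (0:ℝ)) := stop0_const le_rfl hT
  have h1 := 𝔈.E0_eq hξ hξ0
  have h2 := 𝔈.E0_eq hξ' hξ'0
  have h3 := 𝔈.mono h0 hξ hξ0 hξ' hξ'0 h
  exact const_le_const_of_ae ((h1.symm.le.trans h3).trans h2.le)

lemma E0_zero (h7 : 𝔈.PosHom) (hT : 0 ≤ T) : 𝔈.E0 (fun _ => (0:ℝ)) = 0 := by
  have h0 : Stop0 ℱ T (fun _ => (0:ℝ)) := stop0_const le_rfl hT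
  have h1 := 𝔈.E0_eq 𝔈.zero_mem (Filter.Eventually.of_forall fun _ => le_rfl)
  exact (const_eq_const_of_ae ((cond_zero h7 h0).symm.trans h1)).symm

lemma E0_cond {τ ξ : Ω → ℝ} (hτ : Stop0 ℱ T τ)
    (hξ : ξ ∈ 𝔈.Dom) (hξ0 : 0 ≤ᵐ[μ] ξ) (hT : 0 ≤ T) :
    𝔈.E0 (𝔈.cond τ ξ) = 𝔈.E0 ξ := by
  have h0 : Stop0 ℱ T (fun _ => (0:ℝ)) := stop0_const le_rfl hT
  have htc := 𝔈.time_consistent h0 hτ (fun ω => hτ.2.1 ω) hξ hξ0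
  have h1 := 𝔈.E0_eq (𝔈.cond_mem hτ hξ hξ0) (𝔈.cond_nonneg hτ hξ hξ0)
  have h2 := 𝔈.E0_eq hξ hξ0
  exact const_eq_const_of_ae (h1.symm.trans (htc.trans h2))

lemma E0_add_const {ξ : Ω → ℝ} (hξ : ξ ∈ 𝔈.Dom) (hξ0 : 0 ≤ᵐ[μ] ξ)
    {c : ℝ} (hc : 0 ≤ c) (hT : 0 ≤ T) :
    𝔈.E0 (ξ + fun _ => c) = 𝔈.E0 ξ + c := by
  have h0 : Stop0 ℱ T (fun _ => (0:ℝ)) := stop0_const le_rfl hT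
  have htr := 𝔈.translation h0 hξ hξ0 (𝔈.const_mem c)
    (Filter.Eventually.of_forall fun _ => hc) measurable_const
  have h1 := 𝔈.E0_eq (𝔈.add_mem hξ (𝔈.const_mem c))
    (by filter_upwards [hξ0] with ω hω; exact add_nonneg hω hc)
  have h2 := 𝔈.E0_eq hξ hξ0
  refine const_eq_const_of_ae (h1.symm.trans (htr.trans ?_))
  filter_upwards [h2] with ω hω
  simp only [Pi.add_apply] at hω ⊢
  rw [hω]

lemma E0_subadd (h6 : 𝔈.Subadditive) {ξ η : Ω → ℝ}
    (hξ : ξ ∈ 𝔈.Dom) (hξ0 : 0 ≤ᵐ[μ] ξ) (hη : η ∈ 𝔈.Dom) (hη0 : 0 ≤ᵐ[μ] η) (hT : 0 ≤ T) :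
    𝔈.E0 (ξ + η) ≤ 𝔈.E0 ξ + 𝔈.E0 η := by
  have h0 : Stop0 ℱ T (fun _ => (0:ℝ)) := stop0_const le_rfl hT
  have hs := h6 h0 hξ hξ0 hη hη0
  have h1 := 𝔈.E0_eq (𝔈.add_mem hξ hη)
    (by filter_upwards [hξ0, hη0] with ω h1 h2; exact add_nonneg h1 h2)
  have h2 := 𝔈.E0_eq hξ hξ0
  have h3 := 𝔈.E0_eq hη hη0
  refine const_le_const_of_ae (μ := μ) ?_
  filter_upwards [h1, h2, h3, hs] with ω e1 e2 e3 hle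
  simp only [Pi.add_apply] at e1 e2 e3 hle ⊢
  linarith

end FExp

end AuxProofs
section AuxProofs2

open scoped Classical

variable {𝔈 : FExp μ T ℱ}

namespace FExp

lemma smul_domP {ξ : Ω → ℝ} (hξ : ξ ∈ 𝔈.Dom) (hξ0 : 0 ≤ᵐ[μ] ξ) {c : ℝ}
    (hc0 : 0 ≤ c) (hc1 : c ≤ 1) :
    ((fun ω => c * ξ ω) ∈ 𝔈.Dom) ∧ 0 ≤ᵐ[μ] fun ω => c * ξ ω := by
  constructor
  · refine 𝔈.sandwich_mem hξ ?_
    filter_upwards [hξ0] with ω hω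
    simp only [Pi.zero_apply] at hω
    exact ⟨mul_nonneg hc0 hω, by nlinarith⟩
  · filter_upwards [hξ0] with ω hω
    simp only [Pi.zero_apply] at hω
    exact mul_nonneg hc0 hω

lemma max_mem {ξ η : Ω → ℝ} (hξ : ξ ∈ 𝔈.Dom) (hξ0 : 0 ≤ᵐ[μ] ξ)
    (hη : η ∈ 𝔈.Dom) (hη0 : 0 ≤ᵐ[μ] η) : (fun ω => max (ξ ω) (η ω)) ∈ 𝔈.Dom := by
  refine 𝔈.sandwich_mem (𝔈.add_mem hξ hη) ?_
  filter_upwards [hξ0, hη0] with ω h1 h2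
  simp only [Pi.zero_apply] at h1 h2
  refine ⟨le_max_of_le_left h1, ?_⟩
  simp only [Pi.add_apply]
  rcases max_cases (ξ ω) (η ω) with ⟨h, _⟩ | ⟨h, _⟩ <;> rw [h] <;> linarith

lemma indicator_domP {ξ : Ω → ℝ} (hξ : ξ ∈ 𝔈.Dom) (hξ0 : 0 ≤ᵐ[μ] ξ)
    {A : Set Ω} (hA : MeasurableSet A) :
    A.indicator ξ ∈ 𝔈.Dom ∧ 0 ≤ᵐ[μ] A.indicator ξ := by
  refine ⟨𝔈.indicator_mem hξ hA, ?_⟩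
  filter_upwards [hξ0] with ω hω
  by_cases h : ω ∈ A
  · rwa [Set.indicator_of_mem h]
  · simp [Set.indicator_of_notMem h]

end FExp

lemma measurable_indicator_stopping {ν τ : Ω → ℝ}
    (hν : IsStoppingTime ℱ (fun ω => (ν ω : WithTop ℝ)))
    (hτ : IsStoppingTime ℱ (fun ω => (τ ω : WithTop ℝ))) {A : Set Ω} (hA : MeasurableSet[hν.measurableSpace] A)
    (heq : ∀ ω ∈ A, τ ω = ν ω) {h : Ω → ℝ}
    (hh : Measurable[hτ.measurableSpace] h) :
    Measurable[hν.measurableSpace] (A.indicator h) := by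
  intro s hs
  have hA' := (stopR_ms hν A).mp hA
  have hhs := (stopR_ms hτ (h ⁻¹' s)).mp (hh hs)
  have hmain : MeasurableSet[hν.measurableSpace] (A ∩ h ⁻¹' s) := by
    refine (stopR_ms hν _).mpr ⟨hA'.1.inter hhs.1, fun i => ?_⟩
    have heqset : A ∩ h ⁻¹' s ∩ {ω | ν ω ≤ i}
        = (A ∩ {ω | ν ω ≤ i}) ∩ (h ⁻¹' s ∩ {ω | τ ω ≤ i}) := by
      ext ω
      simp only [Set.mem_inter_iff, Set.mem_setOf_eq, Set.mem_preimage]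
      constructor
      · rintro ⟨⟨h1, h2⟩, h3⟩
        exact ⟨⟨h1, h3⟩, h2, (heq ω h1).le.trans h3⟩
      · rintro ⟨⟨h1, h3⟩, h2, _⟩
        exact ⟨⟨h1, h2⟩, h3⟩
    rw [heqset]
    exact (hA'.2 i).inter (hhs.2 i)
  by_cases h0 : (0:ℝ) ∈ s
  · have hps : (A.indicator h) ⁻¹' s = (A ∩ h ⁻¹' s) ∪ Aᶜ := by
      ext ω
      by_cases hω : ω ∈ A <;>
        simp [Set.indicator_of_mem, Set.indicator_of_notMem, hω, h0]
    rw [hps]; exact hmain.union hA.compl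
  · have hps : (A.indicator h) ⁻¹' s = A ∩ h ⁻¹' s := by
      ext ω
      by_cases hω : ω ∈ A <;>
        simp [Set.indicator_of_mem, Set.indicator_of_notMem, hω, h0]
    rw [hps]; exact hmain

lemma isStopIn_piecewise {S τ ρ : Ω → ℝ} (hS : Stop0 ℱ T S)
    (hτ : IsStopIn ℱ T S τ) (hρ : IsStopIn ℱ T S ρ) {A : Set Ω}
    (hA : MeasurableSet[hS.1.measurableSpace] A) :
    IsStopIn ℱ T S (fun ω => if ω ∈ A then τ ω else ρ ω) := by
  have hA' := (stopR_ms hS.1 A).mp hA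
  have hAc' := (stopR_ms hS.1 Aᶜ).mp hA.compl
  refine ⟨fun t => ?_, fun ω => ?_, fun ω => ?_⟩
  · have hset : {ω | (if ω ∈ A then τ ω else ρ ω) ≤ t}
        = ((A ∩ {ω | S ω ≤ t}) ∩ {ω | τ ω ≤ t})
          ∪ ((Aᶜ ∩ {ω | S ω ≤ t}) ∩ {ω | ρ ω ≤ t}) := by
      ext ω
      by_cases hω : ω ∈ A
      · simp only [Set.mem_setOf_eq, if_pos hω, Set.mem_union, Set.mem_inter_iff,
          Set.mem_compl_iff, hω, true_and, not_true_eq_false, false_and, or_false]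
        exact ⟨fun h => ⟨(hτ.2.1 ω).trans h, h⟩, fun h => h.2⟩
      · simp only [Set.mem_setOf_eq, if_neg hω, Set.mem_union, Set.mem_inter_iff,
          Set.mem_compl_iff, hω, not_false_eq_true, true_and, false_and, false_or]
        exact ⟨fun h => ⟨(hρ.2.1 ω).trans h, h⟩, fun h => h.2⟩
    simp only [WithTop.coe_le_coe]
    rw [show {ω | (fun ω => if ω ∈ A then τ ω else ρ ω) ω ≤ t}
        = {ω | (if ω ∈ A then τ ω else ρ ω) ≤ t} from rfl, hset]
    exact ((hA'.2 t).inter (stopR_le hτ.1 t)).union ((hAc'.2 t).inter (stopR_le hρ.1 t))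
  · by_cases hω : ω ∈ A
    · simpa [if_pos hω] using hτ.2.1 ω
    · simpa [if_neg hω] using hρ.2.1 ω
  · by_cases hω : ω ∈ A
    · simpa [if_pos hω] using hτ.2.2 ω
    · simpa [if_neg hω] using hρ.2.2 ω

namespace FExp

lemma cond_indicator_loc_min (h7 : 𝔈.PosHom) {τ ν : Ω → ℝ} (hτ : Stop0 ℱ T τ)
    (hν : Stop0 ℱ T ν) (hle : ∀ ω, ν ω ≤ τ ω) {A : Set Ω}
    (hA : MeasurableSet[hν.1.measurableSpace] A) (heq : ∀ ω ∈ A, τ ω = ν ω)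
    {ξ : Ω → ℝ} (hξ : ξ ∈ 𝔈.Dom) (hξ0 : 0 ≤ᵐ[μ] ξ) :
    A.indicator (𝔈.cond τ ξ) =ᵐ[μ] A.indicator (𝔈.cond ν ξ) := by
  have hAτ : MeasurableSet[hτ.1.measurableSpace] A :=
    IsStoppingTime.measurableSpace_mono hν.1 hτ.1 (fun ω => WithTop.coe_le_coe.mpr (hle ω)) A hA
  have hcondτ_mem := 𝔈.cond_mem hτ hξ hξ0
  have hcondτ_0 := 𝔈.cond_nonneg hτ hξ hξ0
  have hζmem : A.indicator (𝔈.cond τ ξ) ∈ 𝔈.Dom := by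
    refine 𝔈.sandwich_mem hcondτ_mem ?_
    filter_upwards [hcondτ_0] with ω h
    simp only [Pi.zero_apply] at h
    by_cases hω : ω ∈ A
    · rw [Set.indicator_of_mem hω]; exact ⟨h, le_rfl⟩
    · rw [Set.indicator_of_notMem hω]; exact ⟨le_rfl, h⟩
  have hζ0 : 0 ≤ᵐ[μ] A.indicator (𝔈.cond τ ξ) := by
    filter_upwards [hcondτ_0] with ω h
    by_cases hω : ω ∈ A
    · rwa [Set.indicator_of_mem hω]
    · simp [Set.indicator_of_notMem hω]
  have hζmeas : Measurable[hν.1.measurableSpace] (A.indicator (𝔈.cond τ ξ)) :=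
    measurable_indicator_stopping hν.1 hτ.1 hA heq (𝔈.cond_adapted hτ hξ hξ0)
  have hid : 𝔈.cond ν (A.indicator (𝔈.cond τ ξ)) =ᵐ[μ] A.indicator (𝔈.cond τ ξ) :=
    cond_id h7 hν hζmem hζ0 hζmeas
  have hAm : MeasurableSet A := hν.1.measurableSpace_le A hA
  have hξA := indicator_domP (𝔈 := 𝔈) hξ hξ0 hAm
  have hz1 : 𝔈.cond τ (A.indicator ξ) =ᵐ[μ] A.indicator (𝔈.cond τ ξ) :=
    𝔈.zero_one hτ hξ hξ0 hAτ
  have htc : 𝔈.cond ν (𝔈.cond τ (A.indicator ξ)) =ᵐ[μ] 𝔈.cond ν (A.indicator ξ) :=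
    𝔈.time_consistent hν hτ hle hξA.1 hξA.2
  have hcg : 𝔈.cond ν (𝔈.cond τ (A.indicator ξ)) =ᵐ[μ] 𝔈.cond ν (A.indicator (𝔈.cond τ ξ)) :=
    cond_congr hν (𝔈.cond_mem hτ hξA.1 hξA.2) (𝔈.cond_nonneg hτ hξA.1 hξA.2)
      hζmem hζ0 hz1
  have hz2 : 𝔈.cond ν (A.indicator ξ) =ᵐ[μ] A.indicator (𝔈.cond ν ξ) :=
    𝔈.zero_one hν hξ hξ0 hA
  exact hid.symm.trans ((hcg.symm.trans htc).trans hz2)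

lemma cond_indicator_loc (h7 : 𝔈.PosHom) {τ σ : Ω → ℝ} (hτ : Stop0 ℱ T τ)
    (hσ : Stop0 ℱ T σ) {A : Set Ω}
    (hA : MeasurableSet[(stopR_min hτ.1 hσ.1).measurableSpace] A)
    (heq : ∀ ω ∈ A, τ ω = σ ω) {ξ : Ω → ℝ} (hξ : ξ ∈ 𝔈.Dom) (hξ0 : 0 ≤ᵐ[μ] ξ) :
    A.indicator (𝔈.cond τ ξ) =ᵐ[μ] A.indicator (𝔈.cond σ ξ) := by
  have hν : Stop0 ℱ T (fun ω => min (τ ω) (σ ω)) :=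
    ⟨stopR_min hτ.1 hσ.1, fun ω => le_min (hτ.2.1 ω) (hσ.2.1 ω),
      fun ω => le_trans (min_le_left _ _) (hτ.2.2 ω)⟩
  have h1 : A.indicator (𝔈.cond τ ξ) =ᵐ[μ] A.indicator (𝔈.cond (fun ω => min (τ ω) (σ ω)) ξ) :=
    cond_indicator_loc_min h7 hτ hν (fun ω => min_le_left _ _) hA
      (fun ω hω => by rw [heq ω hω, min_self]) hξ hξ0
  have h2 : A.indicator (𝔈.cond σ ξ) =ᵐ[μ] A.indicator (𝔈.cond (fun ω => min (τ ω) (σ ω)) ξ) :=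
    cond_indicator_loc_min h7 hσ hν (fun ω => min_le_right _ _) hA
      (fun ω hω => by rw [← heq ω hω, min_self]) hξ hξ0
  exact h1.trans h2.symm

end FExp

end AuxProofs2
section AuxProofs3

open scoped Classical

variable {𝔈 : FExp μ T ℱ} {X v : (Ω → ℝ) → Ω → ℝ}

lemma isStopIn_min {θ τ σ : Ω → ℝ} (hτ : IsStopIn ℱ T θ τ) (hσ : IsStopIn ℱ T θ σ) :
    IsStopIn ℱ T θ (fun ω => min (τ ω) (σ ω)) :=
  ⟨stopR_min hτ.1 hσ.1, fun ω => le_min (hτ.2.1 ω) (hσ.2.1 ω),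
    fun ω => le_trans (min_le_left _ _) (hτ.2.2 ω)⟩

lemma tendsto_toReal_iSup {f : ℕ → ℝ} {B : ℝ} (hf : Monotone f) (h0 : ∀ n, 0 ≤ f n)
    (hB : ∀ n, f n ≤ B) :
    Tendsto f atTop (nhds ((⨆ n, ENNReal.ofReal (f n)).toReal)) ∧
    (∀ n, f n ≤ (⨆ n, ENNReal.ofReal (f n)).toReal) ∧
    (⨆ n, ENNReal.ofReal (f n)).toReal ≤ B := by
  have hLle : (⨆ n, ENNReal.ofReal (f n)) ≤ ENNReal.ofReal B :=
    iSup_le fun n => ENNReal.ofReal_le_ofReal (hB n)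
  have hLne : (⨆ n, ENNReal.ofReal (f n)) ≠ ⊤ :=
    (lt_of_le_of_lt hLle ENNReal.ofReal_lt_top).ne
  have h1 : Tendsto (fun n => ENNReal.ofReal (f n)) atTop (nhds (⨆ n, ENNReal.ofReal (f n))) :=
    tendsto_atTop_iSup fun a b hab => ENNReal.ofReal_le_ofReal (hf hab)
  have h2 := (ENNReal.tendsto_toReal hLne).comp h1
  refine ⟨h2.congr fun n => ENNReal.toReal_ofReal (h0 n), fun n => ?_, ?_⟩
  · conv_lhs => rw [← ENNReal.toReal_ofReal (h0 n)]
    exact ENNReal.toReal_mono hLne (le_iSup (fun n => ENNReal.ofReal (f n)) n)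
  · exact ENNReal.toReal_le_of_le_ofReal ((h0 0).trans (hB 0)) hLle

namespace FExp

lemma directed_cond (hX : Admissible 𝔈 X) {θ : Ω → ℝ} (hθ : Stop0 ℱ T θ)
    {ρ τ : Ω → ℝ} (hρ : IsStopIn ℱ T θ ρ) (hτ : IsStopIn ℱ T θ τ) :
    ∃ σ : Ω → ℝ, IsStopIn ℱ T θ σ ∧
      𝔈.cond θ (X σ) =ᵐ[μ] fun ω => max (𝔈.cond θ (X ρ) ω) (𝔈.cond θ (X τ) ω) := by
  have hρ0 : Stop0 ℱ T ρ := hρ.stop0 hθ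
  have hτ0 : Stop0 ℱ T τ := hτ.stop0 hθ
  obtain ⟨hXρ, hXρ0, hXρm⟩ := hX.1 ρ hρ0
  obtain ⟨hXτ, hXτ0, hXτm⟩ := hX.1 τ hτ0
  have hgρ := 𝔈.cond_adapted hθ hXρ hXρ0
  have hgτ := 𝔈.cond_adapted hθ hXτ hXτ0
  set A := {ω | 𝔈.cond θ (X τ) ω ≤ 𝔈.cond θ (X ρ) ω} with hA_def
  have hA : MeasurableSet[hθ.1.measurableSpace] A := measurableSet_le hgτ hgρ
  set σ := fun ω => if ω ∈ A then ρ ω else τ ω with hσ_def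
  have hσ : IsStopIn ℱ T θ σ := isStopIn_piecewise hθ hρ hτ hA
  have hσ0 : Stop0 ℱ T σ := hσ.stop0 hθ
  obtain ⟨hXσ, hXσ0, _⟩ := hX.1 σ hσ0
  have hAm : MeasurableSet A := hθ.1.measurableSpace_le A hA
  have hiρ := indicator_domP (𝔈 := 𝔈) hXρ hXρ0 hAm
  have hiτ := indicator_domP (𝔈 := 𝔈) hXτ hXτ0 hAm.compl
  set ζ := A.indicator (X ρ) + Aᶜ.indicator (X τ) with hζ_def
  have hζ : ζ ∈ 𝔈.Dom := 𝔈.add_mem hiρ.1 hiτ.1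
  have hζ0 : 0 ≤ᵐ[μ] ζ := by
    filter_upwards [hiρ.2, hiτ.2] with ω a b
    simp only [Pi.zero_apply] at a b ⊢
    simp only [hζ_def, Pi.add_apply]
    exact add_nonneg a b
  have hXσζ : X σ =ᵐ[μ] ζ := by
    filter_upwards [hX.2 σ ρ hσ0 hρ0, hX.2 σ τ hσ0 hτ0] with ω e1 e2
    by_cases hω : ω ∈ A
    · have hσρ : σ ω = ρ ω := by simp only [hσ_def, if_pos hω]
      rw [e1 hσρ]
      simp only [hζ_def, Pi.add_apply, Set.indicator_of_mem hω,
        Set.indicator_of_notMem (Set.notMem_compl_iff.mpr hω)]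
      ring
    · have hστ : σ ω = τ ω := by simp only [hσ_def, if_neg hω]
      rw [e2 hστ]
      simp only [hζ_def, Pi.add_apply, Set.indicator_of_notMem hω,
        Set.indicator_of_mem (Set.mem_compl hω)]
      ring
  have hcζ : 𝔈.cond θ (X σ) =ᵐ[μ] 𝔈.cond θ ζ := cond_congr hθ hXσ hXσ0 hζ hζ0 hXσζ
  have he1 : A.indicator ζ = A.indicator (X ρ) := by
    funext ω
    by_cases hω : ω ∈ A
    · simp only [Set.indicator_of_mem hω, hζ_def, Pi.add_apply,
        Set.indicator_of_notMem (Set.notMem_compl_iff.mpr hω)]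
      ring
    · simp only [Set.indicator_of_notMem hω]
  have he2 : Aᶜ.indicator ζ = Aᶜ.indicator (X τ) := by
    funext ω
    by_cases hω : ω ∈ A
    · simp only [Set.indicator_of_notMem (Set.notMem_compl_iff.mpr hω)]
    · simp only [Set.indicator_of_mem (Set.mem_compl hω), hζ_def, Pi.add_apply,
        Set.indicator_of_notMem hω]
      ring
  have hz1 : 𝔈.cond θ (A.indicator ζ) =ᵐ[μ] A.indicator (𝔈.cond θ ζ) :=
    𝔈.zero_one hθ hζ hζ0 hA
  have hz2 : 𝔈.cond θ (Aᶜ.indicator ζ) =ᵐ[μ] Aᶜ.indicator (𝔈.cond θ ζ) :=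
    𝔈.zero_one hθ hζ hζ0 hA.compl
  have hz1' : 𝔈.cond θ (A.indicator (X ρ)) =ᵐ[μ] A.indicator (𝔈.cond θ (X ρ)) :=
    𝔈.zero_one hθ hXρ hXρ0 hA
  have hz2' : 𝔈.cond θ (Aᶜ.indicator (X τ)) =ᵐ[μ] Aᶜ.indicator (𝔈.cond θ (X τ)) :=
    𝔈.zero_one hθ hXτ hXτ0 hA.compl
  have c1 : A.indicator (𝔈.cond θ ζ) =ᵐ[μ] A.indicator (𝔈.cond θ (X ρ)) := by
    refine hz1.symm.trans ?_
    rw [he1]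
    exact hz1'
  have c2 : Aᶜ.indicator (𝔈.cond θ ζ) =ᵐ[μ] Aᶜ.indicator (𝔈.cond θ (X τ)) := by
    refine hz2.symm.trans ?_
    rw [he2]
    exact hz2'
  refine ⟨σ, hσ, hcζ.trans ?_⟩
  filter_upwards [c1, c2] with ω h1 h2
  by_cases hω : ω ∈ A
  · rw [Set.indicator_of_mem hω, Set.indicator_of_mem hω] at h1
    have hle : 𝔈.cond θ (X τ) ω ≤ 𝔈.cond θ (X ρ) ω := hω
    rw [h1, max_eq_left hle]
  · rw [Set.indicator_of_mem (Set.mem_compl hω), Set.indicator_of_mem (Set.mem_compl hω)] at h2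
    have hlt : 𝔈.cond θ (X ρ) ω < 𝔈.cond θ (X τ) ω := lt_of_not_ge hω
    rw [h2, max_eq_right hlt.le]

end FExp

end AuxProofs3
section AuxProofs4

open scoped Classical

variable {𝔈 : FExp μ T ℱ} {X v : (Ω → ℝ) → Ω → ℝ}

namespace FExp

variable [IsProbabilityMeasure μ]

lemma exists_approx (hT : 0 < T) (h7 : 𝔈.PosHom)
    (hX : Admissible 𝔈 X) (hbdd : BddRewardE0 𝔈 X)
    (hv : IsValueFam 𝔈 X v) {θ : Ω → ℝ} (hθ : Stop0 ℱ T θ) :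
    ∃ (η : Ω → ℝ) (ρs : ℕ → Ω → ℝ),
      (∀ n, IsStopIn ℱ T θ (ρs n)) ∧
      Measurable[hθ.1.measurableSpace] η ∧ (∀ ω, 0 ≤ η ω) ∧ η ∈ 𝔈.Dom ∧
      v θ =ᵐ[μ] η ∧
      (∀ᵐ ω ∂μ, (∀ i j, i ≤ j → 𝔈.cond θ (X (ρs i)) ω ≤ 𝔈.cond θ (X (ρs j)) ω) ∧
        Tendsto (fun n => 𝔈.cond θ (X (ρs n)) ω) atTop (nhds (η ω)) ∧
        (∀ n, 𝔈.cond θ (X (ρs n)) ω ≤ η ω)) := by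
  classical
  obtain ⟨C, hC⟩ := hbdd
  have hmeas_g : ∀ {ρ : Ω → ℝ}, IsStopIn ℱ T θ ρ → Measurable (𝔈.cond θ (X ρ)) := by
    intro ρ hρ
    obtain ⟨h1, h2, _⟩ := hX.1 ρ (hρ.stop0 hθ)
    exact (𝔈.cond_adapted hθ h1 h2).mono hθ.1.measurableSpace_le le_rfl
  have hint : ∀ {g : Ω → ℝ}, Measurable g → Integrable (fun ω => Real.arctan (g ω)) μ := by
    intro g hg
    refine Integrable.mono' (integrable_const (Real.pi / 2))
      ((Real.continuous_arctan.measurable.comp hg).aestronglyMeasurable) ?_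
    refine Filter.Eventually.of_forall fun ω => ?_
    rw [Real.norm_eq_abs, abs_le]
    exact ⟨(Real.neg_pi_div_two_lt_arctan _).le, (Real.arctan_lt_pi_div_two _).le⟩
  set J : (Ω → ℝ) → ℝ := fun g => ∫ ω, Real.arctan (g ω) ∂μ with hJ
  set K := (fun ρ : Ω → ℝ => J (𝔈.cond θ (X ρ))) '' {ρ | IsStopIn ℱ T θ ρ} with hK
  have hKne : K.Nonempty := ⟨_, ⟨fun _ => T, hθ.stopIn_constT, rfl⟩⟩
  have hKbdd : BddAbove K := by
    refine ⟨Real.pi / 2, ?_⟩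
    rintro r ⟨ρ, hρ, rfl⟩
    have h1 : J (𝔈.cond θ (X ρ)) ≤ ∫ (_ : Ω), Real.pi / 2 ∂μ :=
      integral_mono (hint (hmeas_g hρ)) (integrable_const _)
        fun ω => (Real.arctan_lt_pi_div_two _).le
    simpa using h1
  set c := sSup K with hc
  have happrox : ∀ n : ℕ, ∃ ρ : Ω → ℝ, IsStopIn ℱ T θ ρ ∧
      c - 1 / (n + 1) < J (𝔈.cond θ (X ρ)) := by
    intro n
    have hlt : c - 1 / (n + 1 : ℝ) < c := by
      have : (0:ℝ) < 1 / (n + 1) := by positivity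
      linarith
    obtain ⟨r, ⟨ρ, hρ, rfl⟩, hr⟩ := exists_lt_of_lt_csSup hKne hlt
    exact ⟨ρ, hρ, hr⟩
  choose ρ' hρ'mem hρ'int using happrox
  have hstep : ∀ (p : Ω → ℝ), IsStopIn ℱ T θ p → ∀ n : ℕ,
      ∃ q : Ω → ℝ, IsStopIn ℱ T θ q ∧
        𝔈.cond θ (X q) =ᵐ[μ] fun ω => max (𝔈.cond θ (X (ρ' n)) ω) (𝔈.cond θ (X p) ω) :=
    fun p hp n => directed_cond hX hθ (hρ'mem n) hp
  let Q : ℕ → {p : Ω → ℝ // IsStopIn ℱ T θ p} := fun n =>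
    Nat.rec ⟨ρ' 0, hρ'mem 0⟩
      (fun k prev => ⟨(hstep prev.1 prev.2 (k + 1)).choose,
        (hstep prev.1 prev.2 (k + 1)).choose_spec.1⟩) n
  set ρs : ℕ → Ω → ℝ := fun n => (Q n).1 with hρs
  have hρsmem : ∀ n, IsStopIn ℱ T θ (ρs n) := fun n => (Q n).2
  have hsucc : ∀ n, 𝔈.cond θ (X (ρs (n + 1))) =ᵐ[μ]
      fun ω => max (𝔈.cond θ (X (ρ' (n + 1))) ω) (𝔈.cond θ (X (ρs n)) ω) :=
    fun n => (hstep (Q n).1 (Q n).2 (n + 1)).choose_spec.2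
  set ξ : ℕ → Ω → ℝ := fun n => 𝔈.cond θ (X (ρs n)) with hξdef
  have hξmeasθ : ∀ n, Measurable[hθ.1.measurableSpace] (ξ n) := by
    intro n
    obtain ⟨h1, h2, _⟩ := hX.1 (ρs n) ((hρsmem n).stop0 hθ)
    exact 𝔈.cond_adapted hθ h1 h2
  have hξmeas : ∀ n, Measurable (ξ n) := fun n => hmeas_g (hρsmem n)
  have hξdom : ∀ n, ξ n ∈ 𝔈.Dom ∧ 0 ≤ᵐ[μ] ξ n := by
    intro n
    obtain ⟨h1, h2, _⟩ := hX.1 (ρs n) ((hρsmem n).stop0 hθ)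
    exact ⟨𝔈.cond_mem hθ h1 h2, 𝔈.cond_nonneg hθ h1 h2⟩
  have hmono_ae : ∀ᵐ ω ∂μ, ∀ n, ξ n ω ≤ ξ (n + 1) ω := by
    rw [ae_all_iff]
    intro n
    filter_upwards [hsucc n] with ω hω
    show 𝔈.cond θ (X (ρs n)) ω ≤ 𝔈.cond θ (X (ρs (n + 1))) ω
    rw [hω]
    exact le_max_right _ _
  have hle_v : ∀ᵐ ω ∂μ, ∀ n, ξ n ω ≤ v θ ω :=
    ae_all_iff.2 fun n => (hv θ hθ).1 _ ⟨ρs n, hρsmem n, rfl⟩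
  have hξ0' : ∀ᵐ ω ∂μ, ∀ n, 0 ≤ ξ n ω :=
    ae_all_iff.2 fun n => ((hξdom n).2).mono fun ω h => h
  have hJmono : ∀ {g h : Ω → ℝ}, Measurable g → Measurable h → g ≤ᵐ[μ] h → J g ≤ J h := by
    intro g h hg hh hle
    refine integral_mono_ae (hint hg) (hint hh) ?_
    filter_upwards [hle] with ω hω
    exact Real.arctan_strictMono.monotone hω
  have hJle : ∀ n, J (ξ n) ≤ c := fun n => le_csSup hKbdd ⟨ρs n, hρsmem n, rfl⟩
  have hJge : ∀ n, c - 1 / (n + 1) < J (ξ n) := by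
    intro n
    refine lt_of_lt_of_le (hρ'int n) (hJmono (hmeas_g (hρ'mem n)) (hξmeas n) ?_)
    cases n with
    | zero => exact Filter.Eventually.of_forall fun ω => le_rfl
    | succ k =>
      filter_upwards [hsucc k] with ω hω
      show 𝔈.cond θ (X (ρ' (k + 1))) ω ≤ 𝔈.cond θ (X (ρs (k + 1))) ω
      rw [hω]
      exact le_max_left _ _
  set η : Ω → ℝ := fun ω => (⨆ n, ENNReal.ofReal (ξ n ω)).toReal with hη
  have hηmeasθ : Measurable[hθ.1.measurableSpace] η :=
    ENNReal.measurable_toReal.comp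
      (Measurable.iSup fun n => ENNReal.measurable_ofReal.comp (hξmeasθ n))
  have hηmeas : Measurable η := hηmeasθ.mono hθ.1.measurableSpace_le le_rfl
  have hη0 : ∀ ω, 0 ≤ η ω := fun ω => ENNReal.toReal_nonneg
  have hgood : ∀ᵐ ω ∂μ, (∀ i j, i ≤ j → ξ i ω ≤ ξ j ω) ∧
      Tendsto (fun n => ξ n ω) atTop (nhds (η ω)) ∧ (∀ n, ξ n ω ≤ η ω) ∧ η ω ≤ v θ ω := by
    filter_upwards [hmono_ae, hle_v, hξ0'] with ω h1 h2 h3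
    have hmono : Monotone fun n => ξ n ω := monotone_nat_of_le_succ h1
    obtain ⟨ht, hub, hB⟩ := tendsto_toReal_iSup hmono h3 h2
    exact ⟨fun i j h => hmono h, ht, hub, hB⟩
  have hηdom : η ∈ 𝔈.Dom := by
    refine 𝔈.h5 (ξ := ξ) (fun n => (hξdom n).1) (fun n => (hξdom n).2) ?_ ⟨C, ?_⟩
    · filter_upwards [hgood] with ω h
      exact h.2.1
    · refine Filter.Eventually.frequently (Filter.Eventually.of_forall fun n => ?_)
      obtain ⟨h1, h2, _⟩ := hX.1 (ρs n) ((hρsmem n).stop0 hθ)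
      have he : 𝔈.E0 (ξ n) = 𝔈.E0 (X (ρs n)) := E0_cond hθ h1 h2 hT.le
      rw [he]
      exact hC _ ((hρsmem n).stop0 hθ)
  have hub : ∀ g ∈ {g | ∃ τ' : Ω → ℝ, IsStopIn ℱ T θ τ' ∧ g = 𝔈.cond θ (X τ')},
      g ≤ᵐ[μ] η := by
    rintro g ⟨ρ, hρ, rfl⟩
    have hcomb : ∀ n, ∃ σ : Ω → ℝ, IsStopIn ℱ T θ σ ∧ 𝔈.cond θ (X σ) =ᵐ[μ]
        fun ω => max (𝔈.cond θ (X ρ) ω) (ξ n ω) := fun n => directed_cond hX hθ hρ (hρsmem n)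
    choose σs hσs hσeq using hcomb
    have hJσ : ∀ n, J (fun ω => max (𝔈.cond θ (X ρ) ω) (ξ n ω)) ≤ c := by
      intro n
      have h1 : J (𝔈.cond θ (X (σs n))) ≤ c := le_csSup hKbdd ⟨σs n, hσs n, rfl⟩
      have h2 : J (𝔈.cond θ (X (σs n))) = J (fun ω => max (𝔈.cond θ (X ρ) ω) (ξ n ω)) :=
        integral_congr_ae (by filter_upwards [hσeq n] with ω h; rw [h])
      linarith
    have hmeasmax : ∀ n, Measurable fun ω => max (𝔈.cond θ (X ρ) ω) (ξ n ω) :=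
      fun n => (hmeas_g hρ).max (hξmeas n)
    have habs : ∀ (x : ℝ), ‖Real.arctan x‖ ≤ Real.pi / 2 := by
      intro x
      rw [Real.norm_eq_abs, abs_le]
      exact ⟨(Real.neg_pi_div_two_lt_arctan _).le, (Real.arctan_lt_pi_div_two _).le⟩
    have hdct : Tendsto (fun n => J (fun ω => max (𝔈.cond θ (X ρ) ω) (ξ n ω))) atTop
        (nhds (J (fun ω => max (𝔈.cond θ (X ρ) ω) (η ω)))) := by
      refine tendsto_integral_of_dominated_convergence (fun _ => Real.pi / 2)
        (fun n => (Real.continuous_arctan.measurable.comp (hmeasmax n)).aestronglyMeasurable)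
        (integrable_const _)
        (fun n => Filter.Eventually.of_forall fun ω => habs _) ?_
      filter_upwards [hgood] with ω h
      exact (Real.continuous_arctan.tendsto _).comp (tendsto_const_nhds.max h.2.1)
    have hJmaxη : J (fun ω => max (𝔈.cond θ (X ρ) ω) (η ω)) ≤ c :=
      le_of_tendsto hdct (Filter.Eventually.of_forall fun n => hJσ n)
    have htη : Tendsto (fun n => J (ξ n)) atTop (nhds (J η)) := by
      refine tendsto_integral_of_dominated_convergence (fun _ => Real.pi / 2)
        (fun n => (Real.continuous_arctan.measurable.comp (hξmeas n)).aestronglyMeasurable)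
        (integrable_const _)
        (fun n => Filter.Eventually.of_forall fun ω => habs _) ?_
      filter_upwards [hgood] with ω h
      exact (Real.continuous_arctan.tendsto _).comp h.2.1
    have hJη : c ≤ J η := by
      have hlow : Tendsto (fun n : ℕ => c - 1 / (n + 1)) atTop (nhds c) := by
        have h0 := tendsto_one_div_add_atTop_nhds_zero_nat (𝕜 := ℝ)
        have h1 : Tendsto (fun n : ℕ => c - 1 / (n + 1)) atTop (nhds (c - 0)) :=
          Tendsto.sub tendsto_const_nhds h0
        simpa using h1
      exact le_of_tendsto_of_tendsto' hlow htη fun n => (hJge n).le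
    have hintmax := hint ((hmeas_g hρ).max hηmeas)
    have hintη := hint hηmeas
    have hmle : J η ≤ J (fun ω => max (𝔈.cond θ (X ρ) ω) (η ω)) :=
      hJmono hηmeas ((hmeas_g hρ).max hηmeas)
        (Filter.Eventually.of_forall fun ω => le_max_right _ _)
    have hdiff : ∫ ω, (Real.arctan (max (𝔈.cond θ (X ρ) ω) (η ω)) - Real.arctan (η ω)) ∂μ
        = 0 := by
      rw [integral_sub hintmax hintη]
      have : J (fun ω => max (𝔈.cond θ (X ρ) ω) (η ω)) - J η ≤ 0 := by linarith
      have h0 : 0 ≤ J (fun ω => max (𝔈.cond θ (X ρ) ω) (η ω)) - J η := by linarith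
      linarith
    have hae := (integral_eq_zero_iff_of_nonneg_ae
      (Filter.Eventually.of_forall fun ω =>
        sub_nonneg.mpr (Real.arctan_strictMono.monotone (le_max_right _ _)))
      (hintmax.sub hintη)).1 hdiff
    filter_upwards [hae] with ω hω
    simp only [Pi.zero_apply] at hω
    have heq : Real.arctan (max (𝔈.cond θ (X ρ) ω) (η ω)) = Real.arctan (η ω) := by linarith
    have hmax := Real.arctan_injective heq
    exact le_trans (le_max_left _ _) hmax.le
  have hvle : v θ ≤ᵐ[μ] η := (hv θ hθ).2 η hub
  have hηle : η ≤ᵐ[μ] v θ := by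
    filter_upwards [hgood] with ω h
    exact h.2.2.2
  refine ⟨η, ρs, hρsmem, hηmeasθ, hη0, hηdom, hvle.antisymm hηle, ?_⟩
  filter_upwards [hgood] with ω h
  exact ⟨h.1, h.2.1, h.2.2.1⟩

lemma v_domP (hT : 0 < T) (h7 : 𝔈.PosHom)
    (hX : Admissible 𝔈 X) (hbdd : BddRewardE0 𝔈 X)
    (hv : IsValueFam 𝔈 X v) {θ : Ω → ℝ} (hθ : Stop0 ℱ T θ) :
    v θ ∈ 𝔈.Dom ∧ 0 ≤ᵐ[μ] v θ := by
  obtain ⟨η, ρs, _, _, hη0, hηdom, hvη, _⟩ := exists_approx hT h7 hX hbdd hv hθ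
  constructor
  · refine 𝔈.sandwich_mem hηdom ?_
    filter_upwards [hvη] with ω h
    rw [h]
    exact ⟨hη0 ω, le_rfl⟩
  · filter_upwards [hvη] with ω h
    simp only [Pi.zero_apply]
    rw [h]
    exact hη0 ω

lemma v_ge_X (h7 : 𝔈.PosHom) (hX : Admissible 𝔈 X) (hv : IsValueFam 𝔈 X v)
    {θ : Ω → ℝ} (hθ : Stop0 ℱ T θ) : X θ ≤ᵐ[μ] v θ := by
  obtain ⟨hXθ, hXθ0, hXθm⟩ := hX.1 θ hθ
  have h1 : 𝔈.cond θ (X θ) ≤ᵐ[μ] v θ := (hv θ hθ).1 _ ⟨θ, hθ.stopIn_self, rfl⟩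
  exact (cond_id h7 hθ hXθ hXθ0 hXθm).symm.le.trans h1

lemma v_constT (hT : 0 < T) (h7 : 𝔈.PosHom) (hX : Admissible 𝔈 X)
    (hv : IsValueFam 𝔈 X v) : v (fun _ => T) =ᵐ[μ] X (fun _ => T) := by
  have hcT : Stop0 ℱ T (fun _ => T) := stop0_const hT.le le_rfl
  obtain ⟨hXT, hXT0, hXTm⟩ := hX.1 _ hcT
  have hid := cond_id h7 hcT hXT hXT0 hXTm
  have h1 : 𝔈.cond (fun _ => T) (X (fun _ => T)) ≤ᵐ[μ] v (fun _ => T) :=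
    (hv _ hcT).1 _ ⟨_, hcT.stopIn_self, rfl⟩
  have h2 : v (fun _ => T) ≤ᵐ[μ] 𝔈.cond (fun _ => T) (X (fun _ => T)) := by
    refine (hv _ hcT).2 _ ?_
    rintro g ⟨ρ, hρ, rfl⟩
    have hρT : ρ = fun _ => T := funext fun ω => le_antisymm (hρ.2.2 ω) (hρ.2.1 ω)
    rw [hρT]
  exact (h2.antisymm h1).trans hid

end FExp

end AuxProofs4
section AuxProofs5

open scoped Classical

variable {𝔈 : FExp μ T ℱ} {X v : (Ω → ℝ) → Ω → ℝ}

namespace FExp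

variable [IsProbabilityMeasure μ]

lemma E0_tendsto_mono (hT : 0 < T) (h6 : 𝔈.Subadditive) (h7 : 𝔈.PosHom)
    {ξs : ℕ → Ω → ℝ} {ξ : Ω → ℝ}
    (hdom : ∀ n, ξs n ∈ 𝔈.Dom) (h0 : ∀ n, 0 ≤ᵐ[μ] ξs n) (hm : ∀ n, Measurable (ξs n))
    (hξ : ξ ∈ 𝔈.Dom) (hξ0 : 0 ≤ᵐ[μ] ξ) (hξm : Measurable ξ)
    (hconv : ∀ᵐ ω ∂μ, (∀ n, ξs n ω ≤ ξs (n + 1) ω) ∧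
      Tendsto (fun n => ξs n ω) atTop (nhds (ξ ω))) :
    Tendsto (fun n => 𝔈.E0 (ξs n)) atTop (nhds (𝔈.E0 ξ)) := by
  classical
  have hprop : ∀ᵐ ω ∂μ, (∀ n, ξs n ω ≤ ξs (n + 1) ω) ∧
      Tendsto (fun n => ξs n ω) atTop (nhds (ξ ω)) ∧ (∀ n, 0 ≤ ξs n ω) ∧ 0 ≤ ξ ω := by
    filter_upwards [hconv, ae_all_iff.2 fun n => (h0 n).mono fun ω h => h,
      hξ0] with ω h1 h2 h3
    exact ⟨h1.1, h1.2, h2, h3⟩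
  obtain ⟨N, hWN, hNmeas, hNnull⟩ := exists_measurable_superset_of_null (ae_iff.mp hprop)
  set G := Nᶜ with hGdef
  have hGmeas : MeasurableSet G := hNmeas.compl
  have hGae : ∀ᵐ ω ∂μ, ω ∈ G := by
    rw [ae_iff]
    have : {ω | ¬ ω ∈ G} = N := by
      ext ω; simp [hGdef]
    rwa [this]
  have hGprop : ∀ ω ∈ G, (∀ n, ξs n ω ≤ ξs (n + 1) ω) ∧
      Tendsto (fun n => ξs n ω) atTop (nhds (ξ ω)) ∧ (∀ n, 0 ≤ ξs n ω) ∧ 0 ≤ ξ ω := by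
    intro ω hω
    by_contra hcon
    exact hω (hWN hcon)
  set ξs' : ℕ → Ω → ℝ := fun n => G.indicator (ξs n) with hξs'
  set ξ' : Ω → ℝ := G.indicator ξ with hξ'
  have hdom' : ∀ n, ξs' n ∈ 𝔈.Dom ∧ 0 ≤ᵐ[μ] ξs' n :=
    fun n => indicator_domP (hdom n) (h0 n) hGmeas
  have hξ'dom : ξ' ∈ 𝔈.Dom ∧ 0 ≤ᵐ[μ] ξ' := indicator_domP hξ hξ0 hGmeas
  have hE : ∀ n, 𝔈.E0 (ξs' n) = 𝔈.E0 (ξs n) := by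
    intro n
    refine E0_congr (hdom' n).1 (hdom' n).2 (hdom n) (h0 n) ?_ hT.le
    filter_upwards [hGae] with ω h
    simp only [hξs']
    rw [Set.indicator_of_mem h]
  have hEξ : 𝔈.E0 ξ' = 𝔈.E0 ξ := by
    refine E0_congr hξ'dom.1 hξ'dom.2 hξ hξ0 ?_ hT.le
    filter_upwards [hGae] with ω h
    simp only [hξ']
    rw [Set.indicator_of_mem h]
  have pmono : ∀ ω n, ξs' n ω ≤ ξs' (n + 1) ω := by
    intro ω n
    simp only [hξs']
    by_cases hω : ω ∈ G
    · rw [Set.indicator_of_mem hω, Set.indicator_of_mem hω]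
      exact (hGprop ω hω).1 n
    · rw [Set.indicator_of_notMem hω, Set.indicator_of_notMem hω]
  have p0 : ∀ ω n, 0 ≤ ξs' n ω := by
    intro ω n
    simp only [hξs']
    by_cases hω : ω ∈ G
    · rw [Set.indicator_of_mem hω]; exact (hGprop ω hω).2.2.1 n
    · rw [Set.indicator_of_notMem hω]
  have pξ0 : ∀ ω, 0 ≤ ξ' ω := by
    intro ω
    simp only [hξ']
    by_cases hω : ω ∈ G
    · rw [Set.indicator_of_mem hω]; exact (hGprop ω hω).2.2.2
    · rw [Set.indicator_of_notMem hω]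
  have ptend : ∀ ω, Tendsto (fun n => ξs' n ω) atTop (nhds (ξ' ω)) := by
    intro ω
    by_cases hω : ω ∈ G
    · have := (hGprop ω hω).2.1
      simp only [hξs', hξ', Set.indicator_of_mem hω]
      exact this
    · simp only [hξs', hξ', Set.indicator_of_notMem hω]
      exact tendsto_const_nhds
  have ple : ∀ ω n, ξs' n ω ≤ ξ' ω := by
    intro ω n
    have hmono : Monotone fun k => ξs' k ω := monotone_nat_of_le_succ (pmono ω)
    exact hmono.ge_of_tendsto (ptend ω) n
  have hmeas' : ∀ n, Measurable (ξs' n) := fun n => (hm n).indicator hGmeas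
  have hξ'meas : Measurable ξ' := hξm.indicator hGmeas
  rw [Metric.tendsto_atTop]
  intro ε hε
  have hδ : 0 < ε / 3 := by linarith
  set A : ℕ → Set Ω := fun n => {ω | ε / 3 < ξ' ω - ξs' n ω} with hA
  have hAmeas : ∀ n, MeasurableSet (A n) :=
    fun n => measurableSet_lt measurable_const (hξ'meas.sub (hmeas' n))
  have hAanti : Antitone A := by
    intro i j hij ω hω
    simp only [hA, Set.mem_setOf_eq] at hω ⊢
    have hmono : Monotone fun k => ξs' k ω := monotone_nat_of_le_succ (pmono ω)
    have := hmono hij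
    linarith
  have hAempty : ∀ ω, ω ∉ ⋂ n, A n := by
    intro ω hω
    have h1 := (ptend ω).eventually (eventually_gt_nhds (show ξ' ω - ε / 3 < ξ' ω by linarith))
    obtain ⟨n, hn⟩ := h1.exists
    have h2 := Set.mem_iInter.mp hω n
    simp only [hA, Set.mem_setOf_eq] at h2
    linarith
  have h2app := 𝔈.h2 (ξ := fun _ => (0:ℝ)) 𝔈.zero_mem
    (Filter.Eventually.of_forall fun _ => le_rfl) hξ'dom.1 hξ'dom.2 hAmeas hAanti
    (Filter.Eventually.of_forall hAempty)
  have hzadd : ∀ n, ((fun _ : Ω => (0:ℝ)) + (A n).indicator ξ') = (A n).indicator ξ' := by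
    intro n; funext ω; simp
  have h2app' : Tendsto (fun n => 𝔈.E0 ((A n).indicator ξ')) atTop (nhds 0) := by
    have := h2app
    simp only [hzadd] at this
    rwa [E0_zero h7 hT.le] at this
  obtain ⟨N₀, hN₀⟩ := (Metric.tendsto_atTop.mp h2app') (ε / 3) hδ
  refine ⟨N₀, fun n hn => ?_⟩
  have hA_domP := indicator_domP (𝔈 := 𝔈) hξ'dom.1 hξ'dom.2 (hAmeas n)
  have key1 : 𝔈.E0 ξ' ≤ 𝔈.E0 (ξs' n) + 𝔈.E0 ((A n).indicator ξ') + ε / 3 := by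
    have hpt : ξ' ≤ᵐ[μ] (ξs' n + (A n).indicator ξ') + fun _ => ε / 3 := by
      refine Filter.Eventually.of_forall fun ω => ?_
      simp only [Pi.add_apply]
      by_cases hω : ω ∈ A n
      · rw [Set.indicator_of_mem hω]
        have := p0 ω n
        linarith
      · simp only [hA, Set.mem_setOf_eq, not_lt] at hω
        have hind : 0 ≤ (A n).indicator ξ' ω := by
          by_cases h : ω ∈ A n
          · rw [Set.indicator_of_mem h]; exact pξ0 ω
          · rw [Set.indicator_of_notMem h]
        linarith
    have hsumdom : (ξs' n + (A n).indicator ξ') ∈ 𝔈.Dom := 𝔈.add_mem (hdom' n).1 hA_domP.1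
    have hsum0 : 0 ≤ᵐ[μ] (ξs' n + (A n).indicator ξ') := by
      filter_upwards [hA_domP.2] with ω h
      simp only [Pi.zero_apply, Pi.add_apply] at h ⊢
      exact add_nonneg (p0 ω n) h
    have h1 : 𝔈.E0 ξ' ≤ 𝔈.E0 ((ξs' n + (A n).indicator ξ') + fun _ => ε / 3) := by
      refine E0_mono hξ'dom.1 hξ'dom.2 ?_ ?_ hpt hT.le
      · exact 𝔈.add_mem hsumdom (𝔈.const_mem _)
      · filter_upwards [hsum0] with ω h
        simp only [Pi.zero_apply, Pi.add_apply] at h ⊢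
        linarith
    have h2 : 𝔈.E0 ((ξs' n + (A n).indicator ξ') + fun _ => ε / 3)
        = 𝔈.E0 (ξs' n + (A n).indicator ξ') + ε / 3 :=
      E0_add_const hsumdom hsum0 hδ.le hT.le
    have h3 : 𝔈.E0 (ξs' n + (A n).indicator ξ') ≤ 𝔈.E0 (ξs' n) + 𝔈.E0 ((A n).indicator ξ') :=
      E0_subadd h6 (hdom' n).1 (hdom' n).2 hA_domP.1 hA_domP.2 hT.le
    linarith
  have key2 : 𝔈.E0 (ξs' n) ≤ 𝔈.E0 ξ' :=
    E0_mono (hdom' n).1 (hdom' n).2 hξ'dom.1 hξ'dom.2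
      (Filter.Eventually.of_forall fun ω => ple ω n) hT.le
  have key3 : 0 ≤ 𝔈.E0 ((A n).indicator ξ') := by
    have := E0_mono 𝔈.zero_mem (Filter.Eventually.of_forall fun _ => le_rfl)
      hA_domP.1 hA_domP.2 hA_domP.2 hT.le
    rwa [E0_zero h7 hT.le] at this
  have hsmall : 𝔈.E0 ((A n).indicator ξ') < ε / 3 := by
    have := hN₀ n hn
    rw [Real.dist_eq] at this
    rw [abs_lt] at this
    linarith [this.2]
  rw [Real.dist_eq, abs_lt]
  constructor
  · rw [← hE n, ← hEξ]
    linarith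
  · rw [← hE n, ← hEξ]
    linarith

lemma cond_tendsto_mono (hT : 0 < T) (h6 : 𝔈.Subadditive) (h7 : 𝔈.PosHom)
    {σ : Ω → ℝ} (hσ : Stop0 ℱ T σ) {ξs : ℕ → Ω → ℝ} {ξ : Ω → ℝ}
    (hdom : ∀ n, ξs n ∈ 𝔈.Dom) (h0 : ∀ n, 0 ≤ᵐ[μ] ξs n) (hm : ∀ n, Measurable (ξs n))
    (hξ : ξ ∈ 𝔈.Dom) (hξ0 : 0 ≤ᵐ[μ] ξ) (hξm : Measurable ξ)
    (hconv : ∀ᵐ ω ∂μ, (∀ n, ξs n ω ≤ ξs (n + 1) ω) ∧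
      Tendsto (fun n => ξs n ω) atTop (nhds (ξ ω))) :
    ∀ᵐ ω ∂μ, Tendsto (fun n => 𝔈.cond σ (ξs n) ω) atTop (nhds (𝔈.cond σ ξ ω)) := by
  set ηs : ℕ → Ω → ℝ := fun n => 𝔈.cond σ (ξs n) with hηs
  set Z : Ω → ℝ := 𝔈.cond σ ξ with hZ
  have hηdom : ∀ n, ηs n ∈ 𝔈.Dom := fun n => 𝔈.cond_mem hσ (hdom n) (h0 n)
  have hη0 : ∀ n, 0 ≤ᵐ[μ] ηs n := fun n => 𝔈.cond_nonneg hσ (hdom n) (h0 n)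
  have hZdom : Z ∈ 𝔈.Dom := 𝔈.cond_mem hσ hξ hξ0
  have hZ0 : 0 ≤ᵐ[μ] Z := 𝔈.cond_nonneg hσ hξ hξ0
  have hξsle : ∀ n, ξs n ≤ᵐ[μ] ξs (n + 1) := by
    intro n
    filter_upwards [hconv] with ω h
    exact h.1 n
  have hξsleξ : ∀ n, ξs n ≤ᵐ[μ] ξ := by
    intro n
    filter_upwards [hconv] with ω h
    exact (monotone_nat_of_le_succ h.1).ge_of_tendsto h.2 n
  have hηmono : ∀ᵐ ω ∂μ, ∀ n, ηs n ω ≤ ηs (n + 1) ω :=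
    ae_all_iff.2 fun n =>
      𝔈.mono hσ (hdom n) (h0 n) (hdom (n + 1)) (h0 (n + 1)) (hξsle n)
  have hηleZ : ∀ᵐ ω ∂μ, ∀ n, ηs n ω ≤ Z ω :=
    ae_all_iff.2 fun n => 𝔈.mono hσ (hdom n) (h0 n) hξ hξ0 (hξsleξ n)
  have hη0' : ∀ᵐ ω ∂μ, ∀ n, 0 ≤ ηs n ω :=
    ae_all_iff.2 fun n => (hη0 n).mono fun ω h => h
  set Y : Ω → ℝ := fun ω => (⨆ n, ENNReal.ofReal (ηs n ω)).toReal with hY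
  have hgood : ∀ᵐ ω ∂μ, (∀ i j, i ≤ j → ηs i ω ≤ ηs j ω) ∧
      Tendsto (fun n => ηs n ω) atTop (nhds (Y ω)) ∧ (∀ n, ηs n ω ≤ Y ω) ∧ Y ω ≤ Z ω := by
    filter_upwards [hηmono, hηleZ, hη0'] with ω h1 h2 h3
    have hmono : Monotone fun n => ηs n ω := monotone_nat_of_le_succ h1
    obtain ⟨ht, hub, hB⟩ := tendsto_toReal_iSup hmono h3 h2
    exact ⟨fun i j h => hmono h, ht, hub, hB⟩
  have hE0eq : ∀ n, 𝔈.E0 (ηs n) = 𝔈.E0 (ξs n) := fun n => E0_cond hσ (hdom n) (h0 n) hT.le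
  have hE0Z : 𝔈.E0 Z = 𝔈.E0 ξ := E0_cond hσ hξ hξ0 hT.le
  have hE0le : ∀ n, 𝔈.E0 (ξs n) ≤ 𝔈.E0 ξ :=
    fun n => E0_mono (hdom n) (h0 n) hξ hξ0 (hξsleξ n) hT.le
  have hYdom : Y ∈ 𝔈.Dom := by
    refine 𝔈.h5 (ξ := ηs) hηdom hη0 ?_ ⟨𝔈.E0 ξ, ?_⟩
    · filter_upwards [hgood] with ω h
      exact h.2.1
    · refine Filter.Eventually.frequently (Filter.Eventually.of_forall fun n => ?_)
      rw [hE0eq n]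
      exact hE0le n
  have hY0 : 0 ≤ᵐ[μ] Y := Filter.Eventually.of_forall fun ω => ENNReal.toReal_nonneg
  have hYleZ : Y ≤ᵐ[μ] Z := by
    filter_upwards [hgood] with ω h
    exact h.2.2.2
  have hE0lim : Tendsto (fun n => 𝔈.E0 (ξs n)) atTop (nhds (𝔈.E0 ξ)) :=
    E0_tendsto_mono hT h6 h7 hdom h0 hm hξ hξ0 hξm hconv
  have hE0Yge : 𝔈.E0 ξ ≤ 𝔈.E0 Y := by
    refine le_of_tendsto hE0lim (Filter.Eventually.of_forall fun n => ?_)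
    rw [← hE0eq n]
    refine E0_mono (hηdom n) (hη0 n) hYdom hY0 ?_ hT.le
    filter_upwards [hgood] with ω h
    exact h.2.2.1 n
  have hE0Yle : 𝔈.E0 Y ≤ 𝔈.E0 Z := E0_mono hYdom hY0 hZdom hZ0 hYleZ hT.le
  have hE0YZ : 𝔈.E0 Y = 𝔈.E0 Z := le_antisymm hE0Yle (by rw [hE0Z]; exact hE0Yge)
  have hYZ : Y =ᵐ[μ] Z := by
    have h0' : Stop0 ℱ T (fun _ => (0:ℝ)) := stop0_const le_rfl hT.le
    refine 𝔈.strict_mono h0' hYdom hY0 hZdom hZ0 hYleZ ?_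
    have e1 := 𝔈.E0_eq hYdom hY0
    have e2 := 𝔈.E0_eq hZdom hZ0
    have e3 : (fun _ : Ω => 𝔈.E0 Y) = (fun _ : Ω => 𝔈.E0 Z) := by rw [hE0YZ]
    rw [e3] at e1
    exact e1.trans e2.symm
  filter_upwards [hgood, hYZ] with ω h hyz
  rw [← hyz]
  exact h.2.1

end FExp

end AuxProofs5
section AuxProofs6

open scoped Classical

variable {𝔈 : FExp μ T ℱ} {X v : (Ω → ℝ) → Ω → ℝ}

namespace FExp

variable [IsProbabilityMeasure μ]

lemma supermart (hT : 0 < T) (h6 : 𝔈.Subadditive) (h7 : 𝔈.PosHom)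
    (hX : Admissible 𝔈 X) (hbdd : BddRewardE0 𝔈 X) (hv : IsValueFam 𝔈 X v)
    {σ τ : Ω → ℝ} (hσ : Stop0 ℱ T σ) (hτ : Stop0 ℱ T τ) (hle : ∀ ω, σ ω ≤ τ ω) :
    𝔈.cond σ (v τ) ≤ᵐ[μ] v σ := by
  obtain ⟨η, ρs, hρsmem, hηmeasθ, hη0, hηdom, hvη, hconv⟩ :=
    exists_approx hT h7 hX hbdd hv hτ
  have hXdom : ∀ n, X (ρs n) ∈ 𝔈.Dom ∧ 0 ≤ᵐ[μ] X (ρs n) := by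
    intro n
    obtain ⟨a, b, _⟩ := hX.1 (ρs n) ((hρsmem n).stop0 hτ)
    exact ⟨a, b⟩
  have hξdom : ∀ n, 𝔈.cond τ (X (ρs n)) ∈ 𝔈.Dom :=
    fun n => 𝔈.cond_mem hτ (hXdom n).1 (hXdom n).2
  have hξ0 : ∀ n, 0 ≤ᵐ[μ] 𝔈.cond τ (X (ρs n)) :=
    fun n => 𝔈.cond_nonneg hτ (hXdom n).1 (hXdom n).2
  have hξmeas : ∀ n, Measurable (𝔈.cond τ (X (ρs n))) := fun n =>
    (𝔈.cond_adapted hτ (hXdom n).1 (hXdom n).2).mono hτ.1.measurableSpace_le le_rfl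
  have hηmeas : Measurable η := hηmeasθ.mono hτ.1.measurableSpace_le le_rfl
  have hconv' : ∀ᵐ ω ∂μ, (∀ n, 𝔈.cond τ (X (ρs n)) ω ≤ 𝔈.cond τ (X (ρs (n + 1))) ω) ∧
      Tendsto (fun n => 𝔈.cond τ (X (ρs n)) ω) atTop (nhds (η ω)) := by
    filter_upwards [hconv] with ω h
    exact ⟨fun n => h.1 n (n + 1) (Nat.le_succ n), h.2.1⟩
  have hcmc := cond_tendsto_mono hT h6 h7 hσ hξdom hξ0 hξmeas hηdom
    (Filter.Eventually.of_forall hη0) hηmeas hconv'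
  have hcombined : ∀ᵐ ω ∂μ, ∀ n, 𝔈.cond σ (𝔈.cond τ (X (ρs n))) ω ≤ v σ ω := by
    rw [ae_all_iff]
    intro n
    have htc : 𝔈.cond σ (𝔈.cond τ (X (ρs n))) =ᵐ[μ] 𝔈.cond σ (X (ρs n)) :=
      𝔈.time_consistent hσ hτ hle (hXdom n).1 (hXdom n).2
    have hlevσ : 𝔈.cond σ (X (ρs n)) ≤ᵐ[μ] v σ :=
      (hv σ hσ).1 _ ⟨ρs n, ⟨(hρsmem n).1, fun ω => (hle ω).trans ((hρsmem n).2.1 ω),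
        (hρsmem n).2.2⟩, rfl⟩
    filter_upwards [htc, hlevσ] with ω h1 h2
    rw [h1]
    exact h2
  have hvτDom := v_domP hT h7 hX hbdd hv hτ
  have hcondcongr : 𝔈.cond σ (v τ) =ᵐ[μ] 𝔈.cond σ η :=
    cond_congr hσ hvτDom.1 hvτDom.2 hηdom (Filter.Eventually.of_forall hη0) hvη
  filter_upwards [hcmc, hcombined, hcondcongr] with ω h1 h2 h3
  rw [h3]
  exact le_of_tendsto h1 (Filter.Eventually.of_forall h2)

lemma v_le_on_eq (hT : 0 < T) (h7 : 𝔈.PosHom)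
    (hX : Admissible 𝔈 X) (hv : IsValueFam 𝔈 X v)
    {τ σ : Ω → ℝ} (hτ : Stop0 ℱ T τ) (hσ : Stop0 ℱ T σ) :
    ∀ᵐ ω ∂μ, τ ω = σ ω → v τ ω ≤ v σ ω := by
  classical
  set A := {ω | τ ω = σ ω} with hAdef
  have hνst : IsStoppingTime ℱ fun ω => ((min (τ ω) (σ ω) : ℝ) : WithTop ℝ) :=
    stopR_min hτ.1 hσ.1
  have hν : Stop0 ℱ T (fun ω => min (τ ω) (σ ω)) :=
    ⟨hνst, fun ω => le_min (hτ.2.1 ω) (hσ.2.1 ω),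
      fun ω => le_trans (min_le_left _ _) (hτ.2.2 ω)⟩
  have hA : MeasurableSet[hνst.measurableSpace] A := by
    rw [hAdef, stopR_min_iff hτ.1 hσ.1]
    refine ⟨by simpa only [WithTop.coe_inj] using hτ.1.measurableSet_eq_stopping_time hσ.1, ?_⟩
    have h := hσ.1.measurableSet_eq_stopping_time hτ.1
    simp only [WithTop.coe_inj] at h
    have hset : {ω | σ ω = τ ω} = {ω | τ ω = σ ω} := by
      ext ω
      exact ⟨Eq.symm, Eq.symm⟩
    rwa [hset] at h
  have hAm : MeasurableSet A := hνst.measurableSpace_le A hA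
  have hAτ : MeasurableSet[hτ.1.measurableSpace] A :=
    IsStoppingTime.measurableSpace_mono hνst hτ.1
      (fun ω => WithTop.coe_le_coe.mpr (min_le_left _ _)) A hA
  have key : ∀ ρ : Ω → ℝ, IsStopIn ℱ T τ ρ →
      ∀ᵐ ω ∂μ, ω ∈ A → 𝔈.cond τ (X ρ) ω ≤ v σ ω := by
    intro ρ hρ
    have hρν : IsStopIn ℱ T (fun ω => min (τ ω) (σ ω)) ρ :=
      ⟨hρ.1, fun ω => (min_le_left _ _).trans (hρ.2.1 ω), hρ.2.2⟩
    have hTν : IsStopIn ℱ T (fun ω => min (τ ω) (σ ω)) (fun _ => T) := hν.stopIn_constT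
    set ρ' := fun ω => if ω ∈ A then ρ ω else T with hρ'def
    have hρ'ν : IsStopIn ℱ T (fun ω => min (τ ω) (σ ω)) ρ' :=
      isStopIn_piecewise hν hρν hTν hA
    have hρ'σ : IsStopIn ℱ T σ ρ' := by
      refine ⟨hρ'ν.1, fun ω => ?_, hρ'ν.2.2⟩
      by_cases hω : ω ∈ A
      · have hωe : τ ω = σ ω := hω
        simp only [hρ'def, if_pos hω]
        rw [← hωe]
        exact hρ.2.1 ω
      · simp only [hρ'def, if_neg hω]
        exact hσ.2.2 ω
    have hρ0 : Stop0 ℱ T ρ := hρ.stop0 hτ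
    have hρ'0 : Stop0 ℱ T ρ' := hρ'σ.stop0 hσ
    obtain ⟨hXρ, hXρ0, _⟩ := hX.1 ρ hρ0
    obtain ⟨hXρ', hXρ'0, _⟩ := hX.1 ρ' hρ'0
    have hXind : A.indicator (X ρ) =ᵐ[μ] A.indicator (X ρ') := by
      filter_upwards [hX.2 ρ ρ' hρ0 hρ'0] with ω h
      by_cases hω : ω ∈ A
      · rw [Set.indicator_of_mem hω, Set.indicator_of_mem hω,
          h (by simp only [hρ'def, if_pos hω])]
      · rw [Set.indicator_of_notMem hω, Set.indicator_of_notMem hω]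
    have hiXρ := indicator_domP (𝔈 := 𝔈) hXρ hXρ0 hAm
    have hiXρ' := indicator_domP (𝔈 := 𝔈) hXρ' hXρ'0 hAm
    have e1 : 𝔈.cond τ (A.indicator (X ρ)) =ᵐ[μ] A.indicator (𝔈.cond τ (X ρ)) :=
      𝔈.zero_one hτ hXρ hXρ0 hAτ
    have e2 : 𝔈.cond τ (A.indicator (X ρ')) =ᵐ[μ] A.indicator (𝔈.cond τ (X ρ')) :=
      𝔈.zero_one hτ hXρ' hXρ'0 hAτ
    have e3 : 𝔈.cond τ (A.indicator (X ρ)) =ᵐ[μ] 𝔈.cond τ (A.indicator (X ρ')) :=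
      cond_congr hτ hiXρ.1 hiXρ.2 hiXρ'.1 hiXρ'.2 hXind
    have e4 : A.indicator (𝔈.cond τ (X ρ)) =ᵐ[μ] A.indicator (𝔈.cond τ (X ρ')) :=
      e1.symm.trans (e3.trans e2)
    have e5 : A.indicator (𝔈.cond τ (X ρ')) =ᵐ[μ] A.indicator (𝔈.cond σ (X ρ')) :=
      cond_indicator_loc h7 hτ hσ hA (fun ω hω => hω) hXρ' hXρ'0
    have e6 : 𝔈.cond σ (X ρ') ≤ᵐ[μ] v σ := (hv σ hσ).1 _ ⟨ρ', hρ'σ, rfl⟩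
    filter_upwards [e4, e5, e6] with ω h4 h5 h6 hω
    have h45 := h4.trans h5
    rw [Set.indicator_of_mem hω, Set.indicator_of_mem hω] at h45
    rw [h45]
    exact h6
  have hub : ∀ g ∈ {g | ∃ ρ : Ω → ℝ, IsStopIn ℱ T τ ρ ∧ g = 𝔈.cond τ (X ρ)},
      g ≤ᵐ[μ] fun ω => if ω ∈ A then v σ ω else v τ ω := by
    rintro g ⟨ρ, hρ, rfl⟩
    filter_upwards [key ρ hρ, (hv τ hτ).1 _ ⟨ρ, hρ, rfl⟩] with ω h1 h2
    by_cases hω : ω ∈ A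
    · rw [if_pos hω]
      exact h1 hω
    · rw [if_neg hω]
      exact h2
  have hmin := (hv τ hτ).2 _ hub
  filter_upwards [hmin] with ω h hωeq
  have hω : ω ∈ A := hωeq
  rw [if_pos hω] at h
  exact h

lemma v_consistent (hT : 0 < T) (h7 : 𝔈.PosHom)
    (hX : Admissible 𝔈 X) (hv : IsValueFam 𝔈 X v)
    {τ σ : Ω → ℝ} (hτ : Stop0 ℱ T τ) (hσ : Stop0 ℱ T σ) :
    ∀ᵐ ω ∂μ, τ ω = σ ω → v τ ω = v σ ω := by
  filter_upwards [v_le_on_eq hT h7 hX hv hτ hσ, v_le_on_eq hT h7 hX hv hσ hτ] with ω h1 h2 heq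
  exact le_antisymm (h1 heq) (h2 heq.symm)

end FExp

end AuxProofs6
section AuxProofs7

open scoped Classical

variable {𝔈 : FExp μ T ℱ} {X v : (Ω → ℝ) → Ω → ℝ}

namespace FExp

variable [IsProbabilityMeasure μ]

lemma constT_mem_lambda (hT : 0 < T) (h7 : 𝔈.PosHom)
    (hX : Admissible 𝔈 X) (hv : IsValueFam 𝔈 X v) {l : ℝ} (hl1 : l ≤ 1)
    {θ : Ω → ℝ} (hθ : Stop0 ℱ T θ) :
    IsStopIn ℱ T θ (fun _ => T) ∧
      (fun ω => l * v (fun _ => T) ω) ≤ᵐ[μ] X (fun _ => T) := by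
  refine ⟨hθ.stopIn_constT, ?_⟩
  obtain ⟨_, hXT0, _⟩ := hX.1 _ (stop0_const (T := T) hT.le le_rfl)
  filter_upwards [v_constT hT h7 hX hv, hXT0] with ω h1 h2
  simp only [Pi.zero_apply] at h2
  show l * v (fun _ => T) ω ≤ X (fun _ => T) ω
  rw [h1]
  exact mul_le_of_le_one_left h2 hl1

lemma lambda_min (hT : 0 < T) (h7 : 𝔈.PosHom)
    (hX : Admissible 𝔈 X) (hv : IsValueFam 𝔈 X v) {l : ℝ}
    {θ : Ω → ℝ} (hθ : Stop0 ℱ T θ) {τ σ : Ω → ℝ}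
    (hτm : IsStopIn ℱ T θ τ) (hτi : (fun ω => l * v τ ω) ≤ᵐ[μ] X τ)
    (hσm : IsStopIn ℱ T θ σ) (hσi : (fun ω => l * v σ ω) ≤ᵐ[μ] X σ) :
    IsStopIn ℱ T θ (fun ω => min (τ ω) (σ ω)) ∧
      (fun ω => l * v (fun ω' => min (τ ω') (σ ω')) ω) ≤ᵐ[μ]
        X (fun ω' => min (τ ω') (σ ω')) := by
  have hmin := isStopIn_min hτm hσm
  have hmin0 : Stop0 ℱ T (fun ω => min (τ ω) (σ ω)) := hmin.stop0 hθ
  refine ⟨hmin, ?_⟩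
  have hcτ := v_consistent hT h7 hX hv hmin0 (hτm.stop0 hθ)
  have hcσ := v_consistent hT h7 hX hv hmin0 (hσm.stop0 hθ)
  have hXτ := hX.2 _ τ hmin0 (hτm.stop0 hθ)
  have hXσ := hX.2 _ σ hmin0 (hσm.stop0 hθ)
  filter_upwards [hcτ, hcσ, hXτ, hXσ, hτi, hσi] with ω h1 h2 h3 h4 h5 h6
  show l * v (fun ω' => min (τ ω') (σ ω')) ω ≤ X (fun ω' => min (τ ω') (σ ω')) ω
  rcases le_total (τ ω) (σ ω) with hle | hle
  · have he : (fun ω' => min (τ ω') (σ ω')) ω = τ ω := min_eq_left hle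
    rw [h1 he, h3 he]
    exact h5
  · have he : (fun ω' => min (τ ω') (σ ω')) ω = σ ω := min_eq_right hle
    rw [h2 he, h4 he]
    exact h6

lemma exists_essinf_lambda (hT : 0 < T) (hrcf : RightContinuousFiltration ℱ)
    (h7 : 𝔈.PosHom) (hX : Admissible 𝔈 X) (hv : IsValueFam 𝔈 X v)
    {l : ℝ} (hl1 : l ≤ 1) {θ : Ω → ℝ} (hθ : Stop0 ℱ T θ) :
    ∃ (q : Ω → ℝ) (qs : ℕ → Ω → ℝ),
      IsStoppingTime ℱ (fun ω => (q ω : WithTop ℝ)) ∧ (∀ ω, θ ω ≤ q ω ∧ q ω ≤ T) ∧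
      (∀ n, IsStopIn ℱ T θ (qs n) ∧ (fun ω => l * v (qs n) ω) ≤ᵐ[μ] X (qs n)) ∧
      (∀ σ : Ω → ℝ, IsStopIn ℱ T θ σ → (fun ω => l * v σ ω) ≤ᵐ[μ] X σ → q ≤ᵐ[μ] σ) ∧
      (∀ ω n, q ω ≤ qs n ω) ∧
      (∀ g : Ω → ℝ, (∀ n, g ≤ᵐ[μ] qs n) → g ≤ᵐ[μ] q) := by
  classical
  set Λ : Set (Ω → ℝ) := {ρ | IsStopIn ℱ T θ ρ ∧ (fun ω => l * v ρ ω) ≤ᵐ[μ] X ρ} with hΛ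
  have hTmem : (fun _ : Ω => T) ∈ Λ := constT_mem_lambda hT h7 hX hv hl1 hθ
  have hminΛ : ∀ ρ ∈ Λ, ∀ σ' ∈ Λ, (fun ω => min (ρ ω) (σ' ω)) ∈ Λ := fun ρ hρ σ' hσ' =>
    lambda_min hT h7 hX hv hθ hρ.1 hρ.2 hσ'.1 hσ'.2
  have hmeasρ : ∀ ρ ∈ Λ, Measurable ρ := fun ρ hρ =>
    stopR_measurable hρ.1.1
  have hnn : ∀ ρ ∈ Λ, ∀ ω, 0 ≤ ρ ω := fun ρ hρ ω => le_trans (hθ.2.1 ω) (hρ.1.2.1 ω)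
  have hintρ : ∀ ρ ∈ Λ, Integrable ρ μ := fun ρ hρ =>
    Integrable.mono' (integrable_const T) ((hmeasρ ρ hρ).aestronglyMeasurable)
      (Filter.Eventually.of_forall fun ω => by
        rw [Real.norm_eq_abs, abs_of_nonneg (hnn ρ hρ ω)]
        exact hρ.1.2.2 ω)
  set K := (fun ρ : Ω → ℝ => ∫ ω, ρ ω ∂μ) '' Λ with hK
  have hKne : K.Nonempty := ⟨_, ⟨_, hTmem, rfl⟩⟩
  have hKbdd : BddBelow K := by
    refine ⟨0, ?_⟩
    rintro r ⟨ρ, hρ, rfl⟩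
    exact integral_nonneg (hnn ρ hρ)
  set I := sInf K with hI
  have happrox : ∀ n : ℕ, ∃ ρ, ρ ∈ Λ ∧ ∫ ω, ρ ω ∂μ < I + 1 / (n + 1) := by
    intro n
    have hpos : (0:ℝ) < 1 / (n + 1) := by positivity
    obtain ⟨r, ⟨ρ, hρ, rfl⟩, hr⟩ := exists_lt_of_csInf_lt hKne (lt_add_of_pos_right I hpos)
    exact ⟨ρ, hρ, hr⟩
  choose ρ' hρ'Λ hρ'int using happrox
  let qs : ℕ → Ω → ℝ := fun n =>
    Nat.rec (ρ' 0) (fun k prev => fun ω => min (ρ' (k + 1) ω) (prev ω)) n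
  have hqsΛ : ∀ n, qs n ∈ Λ := by
    intro n
    induction n with
    | zero => exact hρ'Λ 0
    | succ k ih => exact hminΛ _ (hρ'Λ (k + 1)) _ ih
  have hqsanti : ∀ ω, Antitone fun n => qs n ω := fun ω =>
    antitone_nat_of_succ_le fun n => min_le_right _ _
  have hqsge : ∀ n ω, θ ω ≤ qs n ω := fun n ω => (hqsΛ n).1.2.1 ω
  have hqsle : ∀ n ω, qs n ω ≤ T := fun n ω => (hqsΛ n).1.2.2 ω
  have hqsleρ' : ∀ n ω, qs n ω ≤ ρ' n ω := by
    intro n ω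
    cases n with
    | zero => exact le_rfl
    | succ k => exact min_le_left _ _
  set q : Ω → ℝ := fun ω => ⨅ n, qs n ω with hq
  have hbddb : ∀ ω, BddBelow (Set.range fun n => qs n ω) := by
    intro ω
    refine ⟨θ ω, ?_⟩
    rintro r ⟨n, rfl⟩
    exact hqsge n ω
  have hqge : ∀ ω, θ ω ≤ q ω := fun ω => le_ciInf fun n => hqsge n ω
  have hqlen : ∀ ω n, q ω ≤ qs n ω := fun ω n => ciInf_le (hbddb ω) n
  have hqle : ∀ ω, q ω ≤ T := fun ω => (hqlen ω 0).trans (hqsle 0 ω)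
  have hqtend : ∀ ω, Tendsto (fun n => qs n ω) atTop (nhds (q ω)) :=
    fun ω => tendsto_atTop_ciInf (hqsanti ω) (hbddb ω)
  have hqmeas : Measurable q := Measurable.iInf fun n => hmeasρ _ (hqsΛ n)
  have hq0 : ∀ ω, 0 ≤ q ω := fun ω => le_trans (hθ.2.1 ω) (hqge ω)
  have hqint : Integrable q μ :=
    Integrable.mono' (integrable_const T) hqmeas.aestronglyMeasurable
      (Filter.Eventually.of_forall fun ω => by
        rw [Real.norm_eq_abs, abs_of_nonneg (hq0 ω)]
        exact hqle ω)
  have hdct0 : Tendsto (fun n => ∫ ω, qs n ω ∂μ) atTop (nhds (∫ ω, q ω ∂μ)) := by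
    refine tendsto_integral_of_dominated_convergence (fun _ => T)
      (fun n => (hmeasρ _ (hqsΛ n)).aestronglyMeasurable) (integrable_const T)
      (fun n => Filter.Eventually.of_forall fun ω => ?_)
      (Filter.Eventually.of_forall hqtend)
    rw [Real.norm_eq_abs, abs_of_nonneg (hnn _ (hqsΛ n) ω)]
    exact hqsle n ω
  have hIqs : ∀ n, I ≤ ∫ ω, qs n ω ∂μ := fun n => csInf_le hKbdd ⟨qs n, hqsΛ n, rfl⟩
  have hqsI : ∀ n, ∫ ω, qs n ω ∂μ < I + 1 / (n + 1) := fun n =>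
    lt_of_le_of_lt
      (integral_mono (hintρ _ (hqsΛ n)) (hintρ _ (hρ'Λ n)) fun ω => hqsleρ' n ω)
      (hρ'int n)
  have hIq : ∫ ω, q ω ∂μ = I := by
    have h1 : Tendsto (fun n : ℕ => I + 1 / (n + 1)) atTop (nhds I) := by
      have h0 : Tendsto (fun n : ℕ => I + 1 / (n + 1)) atTop (nhds (I + 0)) :=
        Tendsto.add tendsto_const_nhds tendsto_one_div_add_atTop_nhds_zero_nat
      simpa using h0
    have hconst : Tendsto (fun _ : ℕ => I) atTop (nhds I) := tendsto_const_nhds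
    have h2 := tendsto_of_tendsto_of_tendsto_of_le_of_le hconst h1
      (fun n => hIqs n) (fun n => (hqsI n).le)
    exact tendsto_nhds_unique hdct0 h2
  have hlb : ∀ σ' ∈ Λ, q ≤ᵐ[μ] σ' := by
    intro σ' hσ'
    have hwΛ : ∀ n, (fun ω => min (σ' ω) (qs n ω)) ∈ Λ := fun n => hminΛ σ' hσ' _ (hqsΛ n)
    have hIw : ∀ n, I ≤ ∫ ω, min (σ' ω) (qs n ω) ∂μ := fun n => csInf_le hKbdd ⟨_, hwΛ n, rfl⟩
    have hmq : Measurable fun ω => min (σ' ω) (q ω) := (hmeasρ σ' hσ').min hqmeas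
    have hminq0 : ∀ ω, 0 ≤ min (σ' ω) (q ω) := fun ω => le_min (hnn σ' hσ' ω) (hq0 ω)
    have hintminq : Integrable (fun ω => min (σ' ω) (q ω)) μ :=
      Integrable.mono' (integrable_const T) hmq.aestronglyMeasurable
        (Filter.Eventually.of_forall fun ω => by
          rw [Real.norm_eq_abs, abs_of_nonneg (hminq0 ω)]
          exact le_trans (min_le_right _ _) (hqle ω))
    have hdct1 : Tendsto (fun n => ∫ ω, min (σ' ω) (qs n ω) ∂μ) atTop
        (nhds (∫ ω, min (σ' ω) (q ω) ∂μ)) := by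
      refine tendsto_integral_of_dominated_convergence (fun _ => T)
        (fun n => (hmeasρ _ (hwΛ n)).aestronglyMeasurable) (integrable_const T)
        (fun n => Filter.Eventually.of_forall fun ω => ?_)
        (Filter.Eventually.of_forall fun ω => tendsto_const_nhds.min (hqtend ω))
      rw [Real.norm_eq_abs, abs_of_nonneg (hnn _ (hwΛ n) ω)]
      exact (hwΛ n).1.2.2 ω
    have hIle : I ≤ ∫ ω, min (σ' ω) (q ω) ∂μ :=
      ge_of_tendsto hdct1 (Filter.Eventually.of_forall hIw)
    have hminleq : ∫ ω, min (σ' ω) (q ω) ∂μ ≤ ∫ ω, q ω ∂μ :=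
      integral_mono hintminq hqint fun ω => min_le_right _ _
    have hdiff : ∫ ω, (q ω - min (σ' ω) (q ω)) ∂μ = 0 := by
      rw [integral_sub hqint hintminq]
      rw [hIq]
      linarith
    have hae0 := (integral_eq_zero_iff_of_nonneg
      (fun ω => sub_nonneg.2 (min_le_right _ _)) (hqint.sub hintminq)).1 hdiff
    filter_upwards [hae0] with ω h
    simp only [Pi.zero_apply] at h
    have hmineq : min (σ' ω) (q ω) = q ω := by linarith
    exact min_eq_right_iff.mp hmineq
  have hqstop : IsStoppingTime ℱ (fun ω => (q ω : WithTop ℝ)) := by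
    intro t
    simp only [WithTop.coe_le_coe]
    have hmain : MeasurableSet[(⨅ u ∈ Set.Ioi t, (ℱ u : MeasurableSpace Ω))] {ω | q ω ≤ t} := by
      rw [MeasurableSpace.measurableSet_iInf]
      intro u
      rw [MeasurableSpace.measurableSet_iInf]
      intro hu
      have hd : (0:ℝ) < u - t := sub_pos.2 hu
      have hset : {ω | q ω ≤ t}
          = ⋂ k : ℕ, ⋃ n : ℕ, {ω | qs n ω ≤ t + (u - t) / (k + 1)} := by
        ext ω
        simp only [Set.mem_setOf_eq, Set.mem_iInter, Set.mem_iUnion]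
        constructor
        · intro hqt k
          have hlt : q ω < t + (u - t) / (k + 1) := by
            have : (0:ℝ) < (u - t) / (k + 1) := by positivity
            linarith
          obtain ⟨n, hn⟩ := exists_lt_of_ciInf_lt hlt
          exact ⟨n, hn.le⟩
        · intro hk
          by_contra hqt
          push_neg at hqt
          have hε : (0:ℝ) < (q ω - t) / (u - t) := by
            apply div_pos
            · linarith
            · exact hd
          obtain ⟨k, hk1⟩ := exists_nat_one_div_lt hε
          obtain ⟨n, hn⟩ := hk k
          have h1 : q ω ≤ t + (u - t) / (k + 1) := (hqlen ω n).trans hn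
          have h2 : (u - t) / (k + 1) < q ω - t := by
            rw [div_eq_mul_one_div]
            calc (u - t) * (1 / (k + 1)) < (u - t) * ((q ω - t) / (u - t)) :=
              mul_lt_mul_of_pos_left hk1 hd
            _ = q ω - t := by field_simp
          linarith
      rw [hset]
      refine MeasurableSet.iInter fun k => MeasurableSet.iUnion fun n => ?_
      have hle' : t + (u - t) / (k + 1) ≤ u := by
        have h1 : (u - t) / (k + 1) ≤ u - t := by
          apply div_le_self hd.le
          have : (0:ℝ) ≤ (k:ℝ) := Nat.cast_nonneg k
          linarith
        linarith
      exact ℱ.mono hle' _ (stopR_le (hqsΛ n).1.1 (t + (u - t) / (k + 1)))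
    rw [← hrcf t] at hmain
    exact hmain
  refine ⟨q, qs, hqstop, fun ω => ⟨hqge ω, hqle ω⟩, fun n => hqsΛ n,
    fun σ' h1 h2 => hlb σ' ⟨h1, h2⟩, fun ω n => hqlen ω n, ?_⟩
  intro g hg
  filter_upwards [ae_all_iff.2 hg] with ω h
  exact le_ciInf h

end FExp

end AuxProofs7
section AuxProofs8

open scoped Classical

variable {𝔈 : FExp μ T ℱ} {X v : (Ω → ℝ) → Ω → ℝ}

namespace FExp

variable [IsProbabilityMeasure μ]

lemma X_le_combo (hT : 0 < T) (h7 : 𝔈.PosHom)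
    (hX : Admissible 𝔈 X) (hbdd : BddRewardE0 𝔈 X) (hv : IsValueFam 𝔈 X v)
    {l : ℝ} (hl0 : 0 < l) (hl1 : l < 1)
    {θ q : Ω → ℝ} (hθ : Stop0 ℱ T θ)
    (hqstop : IsStoppingTime ℱ (fun ω => (q ω : WithTop ℝ))) (hqbd : ∀ ω, θ ω ≤ q ω ∧ q ω ≤ T)
    (hqlb : ∀ σ : Ω → ℝ, IsStopIn ℱ T θ σ → (fun ω => l * v σ ω) ≤ᵐ[μ] X σ →
      q ≤ᵐ[μ] σ) :
    X θ ≤ᵐ[μ] fun ω => l * v θ ω + (1 - l) * 𝔈.cond θ (v q) ω := by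
  classical
  have hq0 : Stop0 ℱ T q :=
    ⟨hqstop, fun ω => (hθ.2.1 ω).trans (hqbd ω).1, fun ω => (hqbd ω).2⟩
  obtain ⟨η, ρs, _, hηmeasθ, hη0, hηdom, hvη, _⟩ := exists_approx hT h7 hX hbdd hv hθ
  obtain ⟨hXθ, hXθ0, hXθm⟩ := hX.1 θ hθ
  set A := {ω | l * η ω ≤ X θ ω} with hAdef
  have hA : MeasurableSet[hθ.1.measurableSpace] A :=
    measurableSet_le (measurable_const.mul hηmeasθ) hXθm
  set τ' := fun ω => if ω ∈ A then θ ω else T with hτ'def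
  have hτ' : IsStopIn ℱ T θ τ' := isStopIn_piecewise hθ hθ.stopIn_self hθ.stopIn_constT hA
  have hτ'0 : Stop0 ℱ T τ' := hτ'.stop0 hθ
  have hcT : Stop0 ℱ T (fun _ : Ω => T) := stop0_const hT.le le_rfl
  have hτ'Λ : (fun ω => l * v τ' ω) ≤ᵐ[μ] X τ' := by
    have hvcons := v_consistent hT h7 hX hv hτ'0 hθ
    have hvconsT := v_consistent hT h7 hX hv hτ'0 hcT
    have hXcons := hX.2 τ' θ hτ'0 hθ
    have hXconsT := hX.2 τ' (fun _ => T) hτ'0 hcT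
    obtain ⟨_, hXT0, _⟩ := hX.1 _ hcT
    filter_upwards [hvcons, hvconsT, hXcons, hXconsT, hvη, v_constT hT h7 hX hv, hXT0]
      with ω h1 h2 h3 h4 h5 h6 hT0
    show l * v τ' ω ≤ X τ' ω
    by_cases hω : ω ∈ A
    · have he : τ' ω = θ ω := by simp only [hτ'def, if_pos hω]
      rw [h1 he, h3 he, h5]
      exact hω
    · have he' : τ' ω = (fun _ : Ω => T) ω := by simp only [hτ'def, if_neg hω]
      rw [h2 he', h4 he', h6]
      simp only [Pi.zero_apply] at hT0
      exact mul_le_of_le_one_left hT0 hl1.le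
  have hqleτ' := hqlb τ' hτ' hτ'Λ
  have hqθA : ∀ᵐ ω ∂μ, ω ∈ A → q ω = θ ω := by
    filter_upwards [hqleτ'] with ω h hω
    have h1 : τ' ω = θ ω := by simp only [hτ'def, if_pos hω]
    have h2 : q ω ≤ θ ω := by
      rw [← h1]
      exact h
    exact le_antisymm h2 (hqbd ω).1
  have hvqDom := v_domP hT h7 hX hbdd hv hq0
  have hvqcons := v_consistent hT h7 hX hv hq0 hθ
  have hAm : MeasurableSet A := hθ.1.measurableSpace_le A hA
  have hη0' : 0 ≤ᵐ[μ] η := Filter.Eventually.of_forall hη0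
  have hz1 : 𝔈.cond θ (A.indicator (v q)) =ᵐ[μ] A.indicator (𝔈.cond θ (v q)) :=
    𝔈.zero_one hθ hvqDom.1 hvqDom.2 hA
  have hivq := indicator_domP (𝔈 := 𝔈) hvqDom.1 hvqDom.2 hAm
  have hiη := indicator_domP (𝔈 := 𝔈) hηdom hη0' hAm
  have hind_congr : A.indicator (v q) =ᵐ[μ] A.indicator η := by
    filter_upwards [hqθA, hvqcons, hvη] with ω h1 h2 h3
    by_cases hω : ω ∈ A
    · rw [Set.indicator_of_mem hω, Set.indicator_of_mem hω, h2 (h1 hω), h3]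
    · rw [Set.indicator_of_notMem hω, Set.indicator_of_notMem hω]
  have hz2 : 𝔈.cond θ (A.indicator (v q)) =ᵐ[μ] 𝔈.cond θ (A.indicator η) :=
    cond_congr hθ hivq.1 hivq.2 hiη.1 hiη.2 hind_congr
  have hz3 : 𝔈.cond θ (A.indicator η) =ᵐ[μ] A.indicator (𝔈.cond θ η) :=
    𝔈.zero_one hθ hηdom hη0' hA
  have hz4 : 𝔈.cond θ η =ᵐ[μ] η := cond_id h7 hθ hηdom hη0' hηmeasθ
  have h12 : A.indicator (𝔈.cond θ (v q)) =ᵐ[μ] A.indicator (𝔈.cond θ η) :=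
    hz1.symm.trans (hz2.trans hz3)
  have hJ0 := 𝔈.cond_nonneg hθ hvqDom.1 hvqDom.2
  filter_upwards [h12, hz4, v_ge_X h7 hX hv hθ, hvη, hJ0] with ω h1 hb h2 h3 h4
  show X θ ω ≤ l * v θ ω + (1 - l) * 𝔈.cond θ (v q) ω
  simp only [Pi.zero_apply] at h4
  by_cases hω : ω ∈ A
  · rw [Set.indicator_of_mem hω, Set.indicator_of_mem hω] at h1
    rw [h3, h1, hb]
    have harith : l * η ω + (1 - l) * η ω = η ω := by ring
    rw [harith, ← h3]
    exact h2
  · have hω' : ¬ l * η ω ≤ X θ ω := hω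
    push_neg at hω'
    have hlt : X θ ω < l * v θ ω := by
      rw [h3]
      exact hω'
    have hnn : 0 ≤ (1 - l) * 𝔈.cond θ (v q) ω :=
      mul_nonneg (by linarith) h4
    linarith

end FExp

end AuxProofs8
/-- `τ^λ(S)` is a stopping time and `v(S) = E_S[v(τ^λ(S))]`. -/
theorem essInf_lambda_stopping [IsProbabilityMeasure μ] (hT : 0 < T)
    (hcf : CompleteFiltration μ ℱ) (hrcf : RightContinuousFiltration ℱ)
    (𝔈 : FExp μ T ℱ) (h6 : 𝔈.Subadditive) (h7 : 𝔈.PosHom)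
    (X v : (Ω → ℝ) → Ω → ℝ) (hX : Admissible 𝔈 X) (hXce : CE 𝔈 X)
    (hbdd : BddRewardE0 𝔈 X) (hv : IsValueFam 𝔈 X v)
    (S : Ω → ℝ) (hS : Stop0 ℱ T S) (l : ℝ) (hl : l ∈ Set.Ioo (0 : ℝ) 1)
    (tl : Ω → ℝ) (htl_bd : ∀ ω, S ω ≤ tl ω ∧ tl ω ≤ T)
    (htl : IsEssInfFam μ
      {τ | IsStopIn ℱ T S τ ∧ (fun ω => l * v τ ω) ≤ᵐ[μ] X τ} tl) :
    IsStoppingTime ℱ (fun ω => (tl ω : WithTop ℝ)) ∧ v S =ᵐ[μ] 𝔈.cond S (v tl) := by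
  classical
  obtain ⟨hl0, hl1⟩ := hl
  obtain ⟨q, qs, hqstop, hqbd, hqsΛ, hqlb, hqlen, hqglb⟩ :=
    FExp.exists_essinf_lambda hT hrcf h7 hX hv hl1.le hS
  have htlq : tl =ᵐ[μ] q := by
    have h1 : q ≤ᵐ[μ] tl := htl.2 q (fun f hf => hqlb f hf.1 hf.2)
    have h2 : tl ≤ᵐ[μ] q := hqglb tl (fun n => htl.1 _ (hqsΛ n))
    exact h2.antisymm h1
  have hnull : μ {ω | ¬ tl ω = q ω} = 0 := ae_iff.mp htlq
  have htlstop : IsStoppingTime ℱ (fun ω => (tl ω : WithTop ℝ)) := by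
    intro t
    simp only [WithTop.coe_le_coe]
    have hkey : {ω | tl ω ≤ t} =
        (({ω | q ω ≤ t} ∪ ({ω | ¬ tl ω = q ω} ∩ {ω | tl ω ≤ t}))
          \ ({ω | ¬ tl ω = q ω} ∩ {ω | ¬ tl ω ≤ t})) := by
      ext ω
      simp only [Set.mem_setOf_eq, Set.mem_diff, Set.mem_union, Set.mem_inter_iff]
      by_cases he : tl ω = q ω
      · simp [he]
      · by_cases hle : tl ω ≤ t <;> simp [he, hle]
    rw [show {ω | (fun ω => tl ω) ω ≤ t} = {ω | tl ω ≤ t} from rfl] at *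
    rw [hkey]
    have h1 : MeasurableSet[ℱ t] ({ω | ¬ tl ω = q ω} ∩ {ω | tl ω ≤ t}) :=
      hcf _ (measure_mono_null Set.inter_subset_left hnull) t
    have h2 : MeasurableSet[ℱ t] ({ω | ¬ tl ω = q ω} ∩ {ω | ¬ tl ω ≤ t}) :=
      hcf _ (measure_mono_null Set.inter_subset_left hnull) t
    exact ((stopR_le hqstop t).union h1).diff h2
  refine ⟨htlstop, ?_⟩
  have htl0 : Stop0 ℱ T tl :=
    ⟨htlstop, fun ω => (hS.2.1 ω).trans (htl_bd ω).1, fun ω => (htl_bd ω).2⟩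
  have hq0 : Stop0 ℱ T q :=
    ⟨hqstop, fun ω => (hS.2.1 ω).trans (hqbd ω).1, fun ω => (hqbd ω).2⟩
  have hvS := FExp.v_domP hT h7 hX hbdd hv hS
  have hvq := FExp.v_domP hT h7 hX hbdd hv hq0
  have hvtl := FExp.v_domP hT h7 hX hbdd hv htl0
  have hsuper : 𝔈.cond S (v q) ≤ᵐ[μ] v S :=
    FExp.supermart hT h6 h7 hX hbdd hv hS hq0 (fun ω => (hqbd ω).1)
  have hJ0 : 0 ≤ᵐ[μ] 𝔈.cond S (v q) := 𝔈.cond_nonneg hS hvq.1 hvq.2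
  have hub : ∀ g ∈ {g | ∃ ρ : Ω → ℝ, IsStopIn ℱ T S ρ ∧ g = 𝔈.cond S (X ρ)},
      g ≤ᵐ[μ] fun ω => l * v S ω + (1 - l) * 𝔈.cond S (v q) ω := by
    rintro g ⟨ρ, hρ, rfl⟩
    have hρ0 : Stop0 ℱ T ρ := hρ.stop0 hS
    obtain ⟨qρ, qρs, hqρstop, hqρbd, hqρsΛ, hqρlb, hqρlen, hqρglb⟩ :=
      FExp.exists_essinf_lambda hT hrcf h7 hX hv hl1.le hρ0
    have hqρ0 : Stop0 ℱ T qρ :=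
      ⟨hqρstop, fun ω => le_trans (hρ0.2.1 ω) (hqρbd ω).1, fun ω => (hqρbd ω).2⟩
    have hvqρ := FExp.v_domP hT h7 hX hbdd hv hqρ0
    obtain ⟨hXρ, hXρ0, hXρm⟩ := hX.1 ρ hρ0
    have hJρdom := 𝔈.cond_mem hρ0 hvqρ.1 hvqρ.2
    have hJρ0 := 𝔈.cond_nonneg hρ0 hvqρ.1 hvqρ.2
    have hvρ := FExp.v_domP hT h7 hX hbdd hv hρ0
    have hξ1d := FExp.smul_domP (𝔈 := 𝔈) hvρ.1 hvρ.2 hl0.le hl1.le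
    have hξ2d := FExp.smul_domP (𝔈 := 𝔈) hJρdom hJρ0
      (by linarith : (0:ℝ) ≤ 1 - l) (by linarith : 1 - l ≤ 1)
    have hcombo : X ρ ≤ᵐ[μ]
        (fun ω => l * v ρ ω) + fun ω => (1 - l) * 𝔈.cond ρ (v qρ) ω := by
      have h := FExp.X_le_combo hT h7 hX hbdd hv hl0 hl1 hρ0 hqρstop hqρbd hqρlb
      filter_upwards [h] with ω hh
      simpa [Pi.add_apply] using hh
    have hXρ_id : 𝔈.cond ρ (X ρ) =ᵐ[μ] X ρ := FExp.cond_id h7 hρ0 hXρ hXρ0 hXρm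
    have h12dom : ((fun ω => l * v ρ ω) + fun ω => (1 - l) * 𝔈.cond ρ (v qρ) ω) ∈ 𝔈.Dom :=
      𝔈.add_mem hξ1d.1 hξ2d.1
    have h120 : 0 ≤ᵐ[μ] ((fun ω => l * v ρ ω) + fun ω => (1 - l) * 𝔈.cond ρ (v qρ) ω) := by
      filter_upwards [hξ1d.2, hξ2d.2] with ω a b
      simp only [Pi.zero_apply, Pi.add_apply] at a b ⊢
      exact add_nonneg a b
    have e1 : 𝔈.cond S (𝔈.cond ρ (X ρ)) =ᵐ[μ] 𝔈.cond S (X ρ) :=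
      𝔈.time_consistent hS hρ0 hρ.2.1 hXρ hXρ0
    have e2 : 𝔈.cond ρ (X ρ) ≤ᵐ[μ]
        (fun ω => l * v ρ ω) + fun ω => (1 - l) * 𝔈.cond ρ (v qρ) ω :=
      hXρ_id.le.trans hcombo
    have e3 : 𝔈.cond S (𝔈.cond ρ (X ρ)) ≤ᵐ[μ]
        𝔈.cond S ((fun ω => l * v ρ ω) + fun ω => (1 - l) * 𝔈.cond ρ (v qρ) ω) :=
      𝔈.mono hS (𝔈.cond_mem hρ0 hXρ hXρ0) (𝔈.cond_nonneg hρ0 hXρ hXρ0) h12dom h120 e2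
    have e4 : 𝔈.cond S ((fun ω => l * v ρ ω) + fun ω => (1 - l) * 𝔈.cond ρ (v qρ) ω)
        ≤ᵐ[μ] 𝔈.cond S (fun ω => l * v ρ ω) + 𝔈.cond S (fun ω => (1 - l) * 𝔈.cond ρ (v qρ) ω) :=
      h6 hS hξ1d.1 hξ1d.2 hξ2d.1 hξ2d.2
    have e5 : 𝔈.cond S (fun ω => l * v ρ ω) =ᵐ[μ] fun ω => l * 𝔈.cond S (v ρ) ω :=
      h7 l hl0.le hS hvρ.1 hvρ.2
    have e6 : 𝔈.cond S (fun ω => (1 - l) * 𝔈.cond ρ (v qρ) ω)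
        =ᵐ[μ] fun ω => (1 - l) * 𝔈.cond S (𝔈.cond ρ (v qρ)) ω :=
      h7 (1 - l) (by linarith) hS hJρdom hJρ0
    have e7 : 𝔈.cond S (v ρ) ≤ᵐ[μ] v S :=
      FExp.supermart hT h6 h7 hX hbdd hv hS hρ0 hρ.2.1
    have e8 : 𝔈.cond S (𝔈.cond ρ (v qρ)) =ᵐ[μ] 𝔈.cond S (v qρ) :=
      𝔈.time_consistent hS hρ0 hρ.2.1 hvqρ.1 hvqρ.2
    have hqleqρ : q ≤ᵐ[μ] qρ := by
      refine hqρglb q fun n => hqlb (qρs n)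
        ⟨(hqρsΛ n).1.1, fun ω => (hρ.2.1 ω).trans ((hqρsΛ n).1.2.1 ω), (hqρsΛ n).1.2.2⟩
        (hqρsΛ n).2
    have hwstop : IsStoppingTime ℱ fun ω => ((min (q ω) (qρ ω) : ℝ) : WithTop ℝ) :=
      stopR_min hqstop hqρstop
    have hw0 : Stop0 ℱ T (fun ω => min (q ω) (qρ ω)) :=
      ⟨hwstop, fun ω => le_min (hq0.2.1 ω) (hqρ0.2.1 ω),
        fun ω => (min_le_left _ _).trans (hq0.2.2 ω)⟩
    have hwq : (fun ω => min (q ω) (qρ ω)) =ᵐ[μ] q := by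
      filter_upwards [hqleqρ] with ω h
      exact min_eq_left h
    have hSw : ∀ ω, S ω ≤ min (q ω) (qρ ω) := fun ω =>
      le_min (hqbd ω).1 ((hρ.2.1 ω).trans (hqρbd ω).1)
    have hvw := FExp.v_domP hT h7 hX hbdd hv hw0
    have e9 : 𝔈.cond (fun ω => min (q ω) (qρ ω)) (v qρ) ≤ᵐ[μ] v (fun ω => min (q ω) (qρ ω)) :=
      FExp.supermart hT h6 h7 hX hbdd hv hw0 hqρ0 (fun ω => min_le_right _ _)
    have e10 : 𝔈.cond S (𝔈.cond (fun ω => min (q ω) (qρ ω)) (v qρ)) =ᵐ[μ] 𝔈.cond S (v qρ) :=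
      𝔈.time_consistent hS hw0 hSw hvqρ.1 hvqρ.2
    have e11 : 𝔈.cond S (𝔈.cond (fun ω => min (q ω) (qρ ω)) (v qρ)) ≤ᵐ[μ]
        𝔈.cond S (v (fun ω => min (q ω) (qρ ω))) :=
      𝔈.mono hS (𝔈.cond_mem hw0 hvqρ.1 hvqρ.2) (𝔈.cond_nonneg hw0 hvqρ.1 hvqρ.2)
        hvw.1 hvw.2 e9
    have e12 : v (fun ω => min (q ω) (qρ ω)) =ᵐ[μ] v q := by
      filter_upwards [FExp.v_consistent hT h7 hX hv hw0 hq0, hwq] with ω h1 h2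
      exact h1 h2
    have e13 : 𝔈.cond S (v (fun ω => min (q ω) (qρ ω))) =ᵐ[μ] 𝔈.cond S (v q) :=
      FExp.cond_congr hS hvw.1 hvw.2 hvq.1 hvq.2 e12
    filter_upwards [e1, e3, e4, e5, e6, e7, e8, e10, e11, e13] with ω f1 f3 f4 f5 f6 f7 f8
      f10 f11 f13
    show 𝔈.cond S (X ρ) ω ≤ l * v S ω + (1 - l) * 𝔈.cond S (v q) ω
    simp only [Pi.add_apply] at f3 f4
    have g1 : 𝔈.cond S (X ρ) ω ≤ 𝔈.cond S (fun ω => l * v ρ ω) ω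
        + 𝔈.cond S (fun ω => (1 - l) * 𝔈.cond ρ (v qρ) ω) ω := by
      rw [← f1]
      exact f3.trans f4
    rw [f5, f6] at g1
    have g2 : l * 𝔈.cond S (v ρ) ω ≤ l * v S ω :=
      mul_le_mul_of_nonneg_left f7 hl0.le
    have g3 : 𝔈.cond S (𝔈.cond ρ (v qρ)) ω ≤ 𝔈.cond S (v q) ω := by
      rw [f8, ← f10]
      exact f11.trans f13.le
    have g4 : (1 - l) * 𝔈.cond S (𝔈.cond ρ (v qρ)) ω ≤ (1 - l) * 𝔈.cond S (v q) ω :=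
      mul_le_mul_of_nonneg_left g3 (by linarith)
    linarith
  have hmin := (hv S hS).2 _ hub
  have hvleJ : v S ≤ᵐ[μ] 𝔈.cond S (v q) := by
    filter_upwards [hmin] with ω h
    have hh : v S ω ≤ l * v S ω + (1 - l) * 𝔈.cond S (v q) ω := h
    nlinarith [hh, hl0, hl1]
  have hveqJ : v S =ᵐ[μ] 𝔈.cond S (v q) := hvleJ.antisymm hsuper
  have e14 : v q =ᵐ[μ] v tl := by
    filter_upwards [FExp.v_consistent hT h7 hX hv hq0 htl0, htlq] with ω h1 h2
    exact h1 h2.symm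
  have e15 : 𝔈.cond S (v q) =ᵐ[μ] 𝔈.cond S (v tl) :=
    FExp.cond_congr hS hvq.1 hvq.2 hvtl.1 hvtl.2 e14
  exact hveqJ.trans e15

end OptMultStop
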